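/- Suppose Λ₁ and Λ₂ are complementary, primitive sublattices of ℤⁿ, with restriction maps r_i : ℤⁿ → Λ_i*, and suppose the induced map Short(ℤⁿ) → Short(Λ₁) is surjective. Then the rule φ([r₁(χ)]) = [r₂(χ)] for χ ∈ Char(ℤⁿ) gives a well-defined isomorphism φ : (C(Λ₁), d₁) → (C(Λ₂), −d₂) of torsors with ℚ-valued maps. -/

import Mathlib

set_option linter.unusedSectionVars false

open Matrix BigOperators

namespace Greene

/-- A rational number is an integer. -/
def isInt (q : ℚ) : Prop := ∃ m : ℤ, q = (m : ℚ)

section LatticeDefs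

variable {ι : Type} [Fintype ι] [DecidableEq ι]
variable {ι' : Type} [Fintype ι'] [DecidableEq ι']

/-- The bilinear form on `ι → ℚ` with (integral) Gram matrix `B`. -/
def qform (B : Matrix ι ι ℤ) (x y : ι → ℚ) : ℚ :=
  x ⬝ᵥ ((B.map (Int.cast : ℤ → ℚ)) *ᵥ y)

/-- The set of integer vectors: the standard lattice inside `ι → ℚ`. -/
def intVecs (ι : Type) [Fintype ι] [DecidableEq ι] : Set (ι → ℚ) :=
  {x | ∀ i, isInt (x i)}

lemma qform_zero_left (B : Matrix ι ι ℤ) (y : ι → ℚ) : qform B 0 y = 0 :=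
  zero_dotProduct _

lemma qform_add_left (B : Matrix ι ι ℤ) (x x' y : ι → ℚ) :
    qform B (x + x') y = qform B x y + qform B x' y := add_dotProduct _ _ _

lemma qform_neg_left (B : Matrix ι ι ℤ) (x y : ι → ℚ) :
    qform B (-x) y = -qform B x y := neg_dotProduct _ _

/-- The dual lattice `S* = {x ∈ span_ℚ S | ⟨x,y⟩ ∈ ℤ for all y ∈ S}`. -/
def dualOf (B : Matrix ι ι ℤ) (S : Set (ι → ℚ)) : AddSubgroup (ι → ℚ) where
  carrier := {x | x ∈ Submodule.span ℚ S ∧ ∀ y ∈ S, isInt (qform B x y)}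
  zero_mem' := ⟨Submodule.zero_mem _, fun y _ => ⟨0, by simp [qform_zero_left]⟩⟩
  add_mem' := by
    intro a b ha hb
    refine ⟨Submodule.add_mem _ ha.1 hb.1, fun y hy => ?_⟩
    obtain ⟨m, hm⟩ := ha.2 y hy
    obtain ⟨m', hm'⟩ := hb.2 y hy
    exact ⟨m + m', by rw [qform_add_left, hm, hm']; push_cast; ring⟩
  neg_mem' := by
    intro a ha
    refine ⟨Submodule.neg_mem _ ha.1, fun y hy => ?_⟩
    obtain ⟨m, hm⟩ := ha.2 y hy
    exact ⟨-m, by rw [qform_neg_left, hm]; push_cast; ring⟩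

/-- Characteristic covectors: `χ ∈ S*` with `⟨χ,y⟩ ≡ ⟨y,y⟩ (mod 2)` for all `y ∈ S`. -/
def CharOf (B : Matrix ι ι ℤ) (S : Set (ι → ℚ)) : Set (ι → ℚ) :=
  {χ | χ ∈ dualOf B S ∧ ∀ y ∈ S, ∃ m : ℤ, qform B χ y - qform B y y = 2 * (m : ℚ)}

/-- Two covectors are in the same class mod `2S`. -/
def SameClass (S : Set (ι → ℚ)) (χ χ' : ι → ℚ) : Prop :=
  ∃ y ∈ S, χ' = χ + (2 : ℚ) • y

/-- Short characteristic covectors: minimal norm in their class mod `2S`. -/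
def ShortOf (B : Matrix ι ι ℤ) (S : Set (ι → ℚ)) : Set (ι → ℚ) :=
  {χ | χ ∈ CharOf B S ∧ ∀ χ' ∈ CharOf B S, SameClass S χ χ' → qform B χ χ ≤ qform B χ' χ'}

/-- Rank of a lattice: dimension of its rational span. -/
noncomputable def rkOf (S : Set (ι → ℚ)) : ℕ := Module.finrank ℚ (Submodule.span ℚ S)

/-- The lattice `S` sitting inside its dual. -/
def latIn (B : Matrix ι ι ℤ) (S : Set (ι → ℚ)) : AddSubgroup (dualOf B S) :=
  AddSubgroup.closure {x | (x : ι → ℚ) ∈ S}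

/-- The discriminant group `S*/S`. -/
def disc (B : Matrix ι ι ℤ) (S : Set (ι → ℚ)) : Type :=
  dualOf B S ⧸ latIn B S

noncomputable instance (B : Matrix ι ι ℤ) (S : Set (ι → ℚ)) : AddCommGroup (disc B S) :=
  inferInstanceAs (AddCommGroup (dualOf B S ⧸ latIn B S))

/-- The class of a dual vector in the discriminant group. -/
def dmk (B : Matrix ι ι ℤ) (S : Set (ι → ℚ)) {x : ι → ℚ} (hx : x ∈ dualOf B S) :
    disc B S := QuotientAddGroup.mk (⟨x, hx⟩ : dualOf B S)

/-- `S` is an additive subgroup (a sublattice, when contained in a lattice). -/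
def IsLat (S : Set (ι → ℚ)) : Prop :=
  (0 : ι → ℚ) ∈ S ∧ ∀ x ∈ S, ∀ y ∈ S, x - y ∈ S

/-- The form is integer valued on `S`. -/
def IntegralOn (B : Matrix ι ι ℤ) (S : Set (ι → ℚ)) : Prop :=
  ∀ x ∈ S, ∀ y ∈ S, isInt (qform B x y)

/-- Unimodularity: the dual lattice equals the lattice. -/
def UnimodularOn (B : Matrix ι ι ℤ) (S : Set (ι → ℚ)) : Prop :=
  ((dualOf B S : AddSubgroup (ι → ℚ)) : Set (ι → ℚ)) = S

/-- Positive definiteness of the form on the span of `S`. -/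
def PosDefOn (B : Matrix ι ι ℤ) (S : Set (ι → ℚ)) : Prop :=
  ∀ x ∈ Submodule.span ℚ S, x ≠ 0 → 0 < qform B x x

/-- Orthogonality of two sublattices. -/
def OrthogonalSets (B : Matrix ι ι ℤ) (S T : Set (ι → ℚ)) : Prop :=
  ∀ x ∈ S, ∀ y ∈ T, qform B x y = 0

/-- `S, T` are complementary sublattices of `L`: orthogonal with ranks summing to `rk L`. -/
noncomputable def ComplementaryIn (B : Matrix ι ι ℤ) (L S T : Set (ι → ℚ)) : Prop :=
  OrthogonalSets B S T ∧ rkOf S + rkOf T = rkOf L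

/-- `S ⊆ L` is a primitive sublattice: the restriction map `L* → S*` surjects. -/
def PrimitiveIn (B : Matrix ι ι ℤ) (L S : Set (ι → ℚ)) : Prop :=
  ∀ x ∈ dualOf B S, ∃ z ∈ dualOf B L, ∀ u ∈ S, qform B z u = qform B x u

/-- `s` is the signature of the form restricted to the span of `S` (Sylvester form). -/
def IsSignatureOf (B : Matrix ι ι ℤ) (S : Set (ι → ℚ)) (s : ℤ) : Prop :=
  ∃ (p q : ℕ) (v : Fin (p + q) → (ι → ℚ)),
    (∀ i, v i ∈ Submodule.span ℚ S) ∧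
    Submodule.span ℚ (Set.range v) = Submodule.span ℚ S ∧
    LinearIndependent ℚ v ∧
    (∀ i j, i ≠ j → qform B (v i) (v j) = 0) ∧
    (∀ i : Fin (p + q),
      if (i : ℕ) < p then 0 < qform B (v i) (v i) else qform B (v i) (v i) < 0) ∧
    s = (p : ℤ) - (q : ℤ)

/-- `S` admits an orthonormal basis of `n` elements, i.e. `S ≅ ℤⁿ`. -/
def HasOrthonormalBasis (B : Matrix ι ι ℤ) (S : Set (ι → ℚ)) (n : ℕ) : Prop :=
  ∃ v : Fin n → (ι → ℚ), (∀ i, v i ∈ S) ∧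
    (∀ i j, qform B (v i) (v j) = if i = j then 1 else 0) ∧
    (∀ x ∈ S, ∃ c : Fin n → ℤ, x = ∑ i, (c i : ℚ) • v i)

/-- Isomorphism of lattices: an additive bijection preserving the forms. -/
def LatIso (B : Matrix ι ι ℤ) (S : Set (ι → ℚ)) (B' : Matrix ι' ι' ℤ) (S' : Set (ι' → ℚ)) :
    Prop :=
  ∃ f : (ι → ℚ) → (ι' → ℚ), Set.BijOn f S S' ∧
    (∀ x ∈ S, ∀ y ∈ S, f (x + y) = f x + f y) ∧
    (∀ x ∈ S, ∀ y ∈ S, qform B' (f x) (f y) = qform B x y)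

/-- An isomorphism of the torsors `C(S₁) → C(S₂)` (given on representatives by `Φ`),
covering the group isomorphism `ψ` of discriminant groups. -/
def TorsorMapIso (B₁ : Matrix ι ι ℤ) (S₁ : Set (ι → ℚ))
    (B₂ : Matrix ι' ι' ℤ) (S₂ : Set (ι' → ℚ))
    (Φ : (ι → ℚ) → (ι' → ℚ)) (ψ : disc B₁ S₁ ≃+ disc B₂ S₂) : Prop :=
  (∀ χ ∈ CharOf B₁ S₁, Φ χ ∈ CharOf B₂ S₂) ∧
  (∀ χ ∈ CharOf B₁ S₁, ∀ χ' ∈ CharOf B₁ S₁,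
    (SameClass S₁ χ χ' ↔ SameClass S₂ (Φ χ) (Φ χ'))) ∧
  (∀ μ ∈ CharOf B₂ S₂, ∃ χ ∈ CharOf B₁ S₁, SameClass S₂ (Φ χ) μ) ∧
  (∀ χ ∈ CharOf B₁ S₁, ∀ χ' ∈ CharOf B₁ S₁,
    ∀ (x : ι → ℚ) (y : ι' → ℚ) (hx : x ∈ dualOf B₁ S₁) (hy : y ∈ dualOf B₂ S₂),
      χ' = χ + (2 : ℚ) • x → Φ χ' = Φ χ + (2 : ℚ) • y →
      ψ (dmk B₁ S₁ hx) = dmk B₂ S₂ hy)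

/-- Compatibility of `Φ` with the `d`-invariants: `d₂([Φ χ]) = ε · d₁([χ])`,
where `d` is the minimum of `(|χ'|² - rk)/4` over the class. -/
noncomputable def DCompat (B₁ : Matrix ι ι ℤ) (S₁ : Set (ι → ℚ))
    (B₂ : Matrix ι' ι' ℤ) (S₂ : Set (ι' → ℚ))
    (ε : ℚ) (Φ : (ι → ℚ) → (ι' → ℚ)) : Prop :=
  ∀ χ ∈ CharOf B₁ S₁, ∀ q : ℚ,
    IsLeast {t | ∃ χ' ∈ CharOf B₁ S₁, SameClass S₁ χ χ' ∧
      t = (qform B₁ χ' χ' - (rkOf S₁ : ℚ)) / 4} q →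
    IsLeast {t | ∃ μ ∈ CharOf B₂ S₂, SameClass S₂ (Φ χ) μ ∧
      t = (qform B₂ μ μ - (rkOf S₂ : ℚ)) / 4} (ε * q)

/-- Compatibility of `Φ` with the `ρ`-invariants: `ρ₂([Φ χ]) ≡ ε · ρ₁([χ]) (mod 2)`. -/
def RhoCompat (B₁ : Matrix ι ι ℤ) (S₁ : Set (ι → ℚ))
    (B₂ : Matrix ι' ι' ℤ) (S₂ : Set (ι' → ℚ))
    (ε : ℚ) (Φ : (ι → ℚ) → (ι' → ℚ)) : Prop :=
  ∀ χ ∈ CharOf B₁ S₁, ∀ s₁ s₂ : ℤ, IsSignatureOf B₁ S₁ s₁ → IsSignatureOf B₂ S₂ s₂ →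
    ∃ m : ℤ, (qform B₂ (Φ χ) (Φ χ) - (s₂ : ℚ)) / 4 - ε * ((qform B₁ χ χ - (s₁ : ℚ)) / 4)
      = 2 * (m : ℚ)

/-- The `d`-invariants `(C(S₁), d₁)` and `(C(S₂), ε·d₂)` are isomorphic. -/
noncomputable def DIso (B₁ : Matrix ι ι ℤ) (S₁ : Set (ι → ℚ))
    (B₂ : Matrix ι' ι' ℤ) (S₂ : Set (ι' → ℚ)) (ε : ℚ) : Prop :=
  ∃ (Φ : (ι → ℚ) → (ι' → ℚ)) (ψ : disc B₁ S₁ ≃+ disc B₂ S₂),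
    TorsorMapIso B₁ S₁ B₂ S₂ Φ ψ ∧ DCompat B₁ S₁ B₂ S₂ ε Φ

end LatticeDefs

/-- An abstract integral lattice, presented by its Gram matrix. -/
structure IntLattice where
  n : ℕ
  B : Matrix (Fin n) (Fin n) ℤ
  symm : B.IsSymm
  nondeg : B.det ≠ 0

/-- The Gram matrix of the orthogonal direct sum `Λ₁ ⊥ Λ₂`. -/
def glueGram (L₁ L₂ : IntLattice) :
    Matrix (Fin L₁.n ⊕ Fin L₂.n) (Fin L₁.n ⊕ Fin L₂.n) ℤ :=
  Matrix.fromBlocks L₁.B 0 0 L₂.B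

/-- The glue lattice `Λ₁ ⊕_ψ Λ₂ = {x + y ∈ Λ₁* ⊕ Λ₂* : ψ(x̄) = ȳ}`. -/
def glueSet (L₁ L₂ : IntLattice)
    (ψ : disc L₁.B (intVecs (Fin L₁.n)) ≃+ disc L₂.B (intVecs (Fin L₂.n))) :
    Set (Fin L₁.n ⊕ Fin L₂.n → ℚ) :=
  {w | ∃ (h₁ : (w ∘ Sum.inl) ∈ dualOf L₁.B (intVecs (Fin L₁.n)))
        (h₂ : (w ∘ Sum.inr) ∈ dualOf L₂.B (intVecs (Fin L₂.n))),
        ψ (dmk _ _ h₁) = dmk _ _ h₂}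

/-- `Λ₁` embedded in the first factor of `Λ₁* ⊕ Λ₂*`. -/
def inlLat (L₁ L₂ : IntLattice) : Set (Fin L₁.n ⊕ Fin L₂.n → ℚ) :=
  {w | (w ∘ Sum.inl) ∈ intVecs (Fin L₁.n) ∧ w ∘ Sum.inr = 0}

/-- `Λ₂` embedded in the second factor of `Λ₁* ⊕ Λ₂*`. -/
def inrLat (L₁ L₂ : IntLattice) : Set (Fin L₁.n ⊕ Fin L₂.n → ℚ) :=
  {w | (w ∘ Sum.inr) ∈ intVecs (Fin L₂.n) ∧ w ∘ Sum.inl = 0}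

/-- Stabilization `S ⊕ ℤᵏ`. -/
def stabSet {ι : Type} [Fintype ι] [DecidableEq ι] (S : Set (ι → ℚ)) (k : ℕ) :
    Set (ι ⊕ Fin k → ℚ) :=
  {w | (w ∘ Sum.inl) ∈ S ∧ ∀ j, isInt (w (Sum.inr j))}

/-- A finite loopless multigraph, with a reference orientation of each edge. -/
structure MultiGraph where
  nV : ℕ
  nE : ℕ
  hd : Fin nE → Fin nV
  tl : Fin nE → Fin nV
  loopless : ∀ e, hd e ≠ tl e

namespace MultiGraph

/-- The boundary map `C₁(G;ℚ) → C₀(G;ℚ)`, `∂ e = head(e) − tail(e)`. -/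
def bndry (G : MultiGraph) (x : Fin G.nE → ℚ) : Fin G.nV → ℚ :=
  fun v => ∑ e, x e * ((if G.hd e = v then 1 else 0) - (if G.tl e = v then 1 else 0))

/-- The flow lattice `ℱ(G) = ker ∂ ∩ C₁(G;ℤ)`. -/
def flowSet (G : MultiGraph) : Set (Fin G.nE → ℚ) :=
  {x | (∀ e, isInt (x e)) ∧ G.bndry x = 0}

/-- The cut lattice `𝒞(G) = im ∂* ∩ C₁(G;ℤ)`. -/
def cutSet (G : MultiGraph) : Set (Fin G.nE → ℚ) :=
  {x | (∀ e, isInt (x e)) ∧ ∃ g : Fin G.nV → ℚ, ∀ e, x e = g (G.hd e) - g (G.tl e)}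

/-- Reachability using only edges from the set `A`. -/
def ReachIn (G : MultiGraph) (A : Set (Fin G.nE)) : Fin G.nV → Fin G.nV → Prop :=
  Relation.ReflTransGen
    (fun u v => ∃ e ∈ A, (G.hd e = u ∧ G.tl e = v) ∨ (G.hd e = v ∧ G.tl e = u))

def Connected (G : MultiGraph) : Prop := ∀ u v, G.ReachIn Set.univ u v

/-- 2-edge-connectedness: connected, and removing any one edge leaves it connected. -/
def TwoEdgeConnected (G : MultiGraph) : Prop :=
  G.Connected ∧ ∀ e : Fin G.nE, ∀ u v, G.ReachIn {e}ᶜ u v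

/-- `C` is the edge set of a cycle of `G`. -/
def IsCycleEdgeSet (G : MultiGraph) (C : Set (Fin G.nE)) : Prop :=
  ∃ k : ℕ, 0 < k ∧ ∃ (e : Fin k → Fin G.nE) (v : Fin k → Fin G.nV),
    Function.Injective e ∧ Function.Injective v ∧ C = Set.range e ∧
    ∀ i, (G.hd (e i) = v (finRotate k i) ∧ G.tl (e i) = v i) ∨
         (G.tl (e i) = v (finRotate k i) ∧ G.hd (e i) = v i)

/-- A maximal spanning forest: acyclic and realizing all of `G`'s reachability. -/
def IsMaxForest (G : MultiGraph) (F : Finset (Fin G.nE)) : Prop :=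
  (∀ C, G.IsCycleEdgeSet C → ¬(C ⊆ (↑F : Set (Fin G.nE)))) ∧
  ∀ u v, G.ReachIn Set.univ u v → G.ReachIn (↑F) u v

open Classical in
/-- The fundamental cut vector of `e ∈ F`:
`+1` on edges leaving the component `K₁` of the tail of `e` in `F − e`,
`−1` on edges entering it, `0` otherwise. -/
noncomputable def cutVec (G : MultiGraph) (F : Finset (Fin G.nE)) (e : Fin G.nE) :
    Fin G.nE → ℚ := fun j =>
  (if G.ReachIn (↑(F.erase e)) (G.tl j) (G.tl e) then 1 else 0)
    - (if G.ReachIn (↑(F.erase e)) (G.hd j) (G.tl e) then 1 else 0)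

/-- `x` is the fundamental cycle vector of `e ∉ F`: the unique flow supported on
`F ∪ {e}` whose coefficient on `e` is `+1`. -/
def IsFundCycleVec (G : MultiGraph) (F : Finset (Fin G.nE)) (e : Fin G.nE)
    (x : Fin G.nE → ℚ) : Prop :=
  G.bndry x = 0 ∧ (∀ j, j ∉ F → j ≠ e → x j = 0) ∧ x e = 1

/-- Reorienting the edges of `G`: `o e = true` keeps the reference direction. -/
def reorient (G : MultiGraph) (o : Fin G.nE → Bool) : MultiGraph :=
  { G with
    hd := fun e => if o e then G.hd e else G.tl e
    tl := fun e => if o e then G.tl e else G.hd e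
    loopless := by
      intro e
      by_cases h : o e = true
      · simpa [h] using G.loopless e
      · simpa [h] using (G.loopless e).symm }

end MultiGraph

/-- A 2-isomorphism: a bijection of edge sets preserving edge sets of cycles. -/
def TwoIsomorphic (G G' : MultiGraph) : Prop :=
  ∃ σ : Fin G.nE ≃ Fin G'.nE, ∀ C, G.IsCycleEdgeSet C ↔ G'.IsCycleEdgeSet (σ '' C)

/-! ### Auxiliary lemmas -/

section Aux

variable {n : ℕ}

lemma isInt_zero : isInt 0 := ⟨0, by norm_num⟩

lemma isInt_int (m : ℤ) : isInt (m : ℚ) := ⟨m, rfl⟩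

lemma isInt_add {a b : ℚ} (ha : isInt a) (hb : isInt b) : isInt (a + b) := by
  obtain ⟨x, rfl⟩ := ha; obtain ⟨y, rfl⟩ := hb; exact ⟨x + y, by push_cast; ring⟩

lemma isInt_neg {a : ℚ} (ha : isInt a) : isInt (-a) := by
  obtain ⟨x, rfl⟩ := ha; exact ⟨-x, by push_cast; ring⟩

lemma isInt_sub {a b : ℚ} (ha : isInt a) (hb : isInt b) : isInt (a - b) := by
  obtain ⟨x, rfl⟩ := ha; obtain ⟨y, rfl⟩ := hb; exact ⟨x - y, by push_cast; ring⟩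

lemma isInt_mul {a b : ℚ} (ha : isInt a) (hb : isInt b) : isInt (a * b) := by
  obtain ⟨x, rfl⟩ := ha; obtain ⟨y, rfl⟩ := hb; exact ⟨x * y, by push_cast; ring⟩

lemma isInt_sum {ι : Type*} (s : Finset ι) (f : ι → ℚ) (h : ∀ i ∈ s, isInt (f i)) :
    isInt (∑ i ∈ s, f i) := by
  classical
  induction s using Finset.induction_on with
  | empty => simpa using isInt_zero
  | insert _ _ hx ih =>
    rw [Finset.sum_insert hx]
    exact isInt_add (h _ (Finset.mem_insert_self _ _))
      (ih fun i hi => h i (Finset.mem_insert_of_mem hi))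

lemma qform_one (x y : Fin n → ℚ) :
    qform (1 : Matrix (Fin n) (Fin n) ℤ) x y = x ⬝ᵥ y := by
  unfold qform
  rw [Matrix.map_one _ (by norm_num) (by norm_num), Matrix.one_mulVec]

lemma mem_intVecs {x : Fin n → ℚ} : x ∈ intVecs (Fin n) ↔ ∀ i, isInt (x i) := Iff.rfl

lemma intVecs_add {x y : Fin n → ℚ} (hx : x ∈ intVecs (Fin n)) (hy : y ∈ intVecs (Fin n)) :
    x + y ∈ intVecs (Fin n) := fun i => isInt_add (hx i) (hy i)

lemma intVecs_sub {x y : Fin n → ℚ} (hx : x ∈ intVecs (Fin n)) (hy : y ∈ intVecs (Fin n)) :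
    x - y ∈ intVecs (Fin n) := fun i => isInt_sub (hx i) (hy i)

lemma intVecs_neg {x : Fin n → ℚ} (hx : x ∈ intVecs (Fin n)) :
    -x ∈ intVecs (Fin n) := fun i => isInt_neg (hx i)

lemma dot_int {x y : Fin n → ℚ} (hx : x ∈ intVecs (Fin n)) (hy : y ∈ intVecs (Fin n)) :
    isInt (x ⬝ᵥ y) :=
  isInt_sum _ _ fun i _ => isInt_mul (hx i) (hy i)

lemma single_mem_intVecs (i : Fin n) : (Pi.single i 1 : Fin n → ℚ) ∈ intVecs (Fin n) := by
  intro j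
  by_cases h : j = i
  · subst h; rw [Pi.single_eq_same]; exact ⟨1, by norm_num⟩
  · rw [Pi.single_eq_of_ne h]; exact isInt_zero

lemma span_intVecs : Submodule.span ℚ (intVecs (Fin n)) = ⊤ := by
  rw [eq_top_iff]
  intro x _
  have hx : x = ∑ i, x i • (Pi.single i 1 : Fin n → ℚ) := by
    ext j
    rw [Finset.sum_apply]
    simp [Pi.single_apply]
  rw [hx]
  exact Submodule.sum_mem _ fun i _ =>
    Submodule.smul_mem _ _ (Submodule.subset_span (single_mem_intVecs i))

lemma mem_dual_intVecs {x : Fin n → ℚ} :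
    x ∈ dualOf (1 : Matrix (Fin n) (Fin n) ℤ) (intVecs (Fin n)) ↔ x ∈ intVecs (Fin n) := by
  constructor
  · rintro ⟨-, h⟩ i
    have := h _ (single_mem_intVecs i)
    rwa [qform_one, dotProduct_single, mul_one] at this
  · intro hx
    exact ⟨by rw [span_intVecs]; trivial, fun y hy => by rw [qform_one]; exact dot_int hx hy⟩

lemma mem_char_intVecs {χ : Fin n → ℚ} :
    χ ∈ CharOf (1 : Matrix (Fin n) (Fin n) ℤ) (intVecs (Fin n)) ↔
      ∀ i, ∃ m : ℤ, χ i = 2 * m + 1 := by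
  constructor
  · rintro ⟨hd, hc⟩ i
    have hχi : isInt (χ i) := (mem_dual_intVecs.mp hd) i
    obtain ⟨a, ha⟩ := hχi
    obtain ⟨m, hm⟩ := hc _ (single_mem_intVecs i)
    rw [qform_one, qform_one, dotProduct_single, mul_one, ha] at hm
    have h1 : (Pi.single i 1 : Fin n → ℚ) ⬝ᵥ Pi.single i 1 = 1 := by
      rw [dotProduct_single, Pi.single_eq_same]; norm_num
    rw [h1] at hm
    refine ⟨m, ?_⟩
    rw [ha]
    have : (a : ℚ) = 2 * m + 1 := by linarith
    exact this
  · intro h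
    have hint : χ ∈ intVecs (Fin n) := fun i => by
      obtain ⟨m, hm⟩ := h i; exact ⟨2 * m + 1, by rw [hm]; push_cast; ring⟩
    refine ⟨mem_dual_intVecs.mpr hint, fun y hy => ?_⟩
    rw [qform_one, qform_one]
    choose m hm using h
    choose b hb using hy
    have key : ∀ i : Fin n, ∃ k : ℤ, χ i * y i - y i * y i = 2 * (k : ℚ) := by
      intro i
      have heven : Even (b i * b i - b i) := by
        have := Int.even_mul_succ_self (b i - 1)
        simpa [mul_comm, sub_mul, mul_sub] using (by ring_nf; ring_nf at this; exact this :
          Even ((b i - 1) * b i))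
      obtain ⟨c, hc⟩ := heven
      refine ⟨m i * b i - c, ?_⟩
      rw [hm i, hb i]
      have : (b i : ℚ) * b i - b i = 2 * c := by
        have := congrArg (fun t : ℤ => (t : ℚ)) hc
        push_cast at this
        push_cast
        linarith
      push_cast
      linarith
    choose k hk using key
    refine ⟨∑ i, k i, ?_⟩
    have : χ ⬝ᵥ y - y ⬝ᵥ y = ∑ i, (χ i * y i - y i * y i) := by
      unfold dotProduct
      rw [← Finset.sum_sub_distrib]
    rw [this]
    rw [Finset.sum_congr rfl fun i _ => hk i, ← Finset.mul_sum]
    push_cast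
    ring

lemma char_intVecs_min {χ : Fin n → ℚ}
    (h : χ ∈ CharOf (1 : Matrix (Fin n) (Fin n) ℤ) (intVecs (Fin n))) :
    (n : ℚ) ≤ χ ⬝ᵥ χ := by
  choose m hm using mem_char_intVecs.mp h
  have : ∀ i : Fin n, (1 : ℚ) ≤ χ i * χ i := by
    intro i
    rw [hm i]
    have h1 : (1 : ℤ) ≤ (2 * m i + 1) * (2 * m i + 1) := by
      rcases le_or_gt 0 (m i) with h' | h' <;> nlinarith
    calc (1 : ℚ) = ((1 : ℤ) : ℚ) := by norm_num
    _ ≤ (((2 * m i + 1) * (2 * m i + 1) : ℤ) : ℚ) := by exact_mod_cast h1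
    _ = (2 * (m i : ℚ) + 1) * (2 * (m i : ℚ) + 1) := by push_cast; ring
  calc (n : ℚ) = ∑ _i : Fin n, (1 : ℚ) := by simp
  _ ≤ ∑ i, χ i * χ i := Finset.sum_le_sum fun i _ => this i
  _ = χ ⬝ᵥ χ := rfl

lemma char_intVecs_diff {χ χ' : Fin n → ℚ}
    (h : χ ∈ CharOf (1 : Matrix (Fin n) (Fin n) ℤ) (intVecs (Fin n)))
    (h' : χ' ∈ CharOf (1 : Matrix (Fin n) (Fin n) ℤ) (intVecs (Fin n))) :
    ∃ w ∈ intVecs (Fin n), χ' = χ + (2 : ℚ) • w := by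
  choose m hm using mem_char_intVecs.mp h
  choose m' hm' using mem_char_intVecs.mp h'
  refine ⟨fun i => ((m' i - m i : ℤ) : ℚ), fun i => isInt_int _, ?_⟩
  ext i
  simp only [Pi.add_apply, Pi.smul_apply, smul_eq_mul]
  rw [hm i, hm' i]
  push_cast
  ring

lemma ones_char : (fun _ => (1 : ℚ)) ∈ CharOf (1 : Matrix (Fin n) (Fin n) ℤ) (intVecs (Fin n)) :=
  mem_char_intVecs.mpr fun _ => ⟨0, by norm_num⟩

lemma char_intVecs_add_two_smul {χ w : Fin n → ℚ}
    (h : χ ∈ CharOf (1 : Matrix (Fin n) (Fin n) ℤ) (intVecs (Fin n)))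
    (hw : w ∈ intVecs (Fin n)) :
    χ + (2 : ℚ) • w ∈ CharOf (1 : Matrix (Fin n) (Fin n) ℤ) (intVecs (Fin n)) := by
  choose m hm using mem_char_intVecs.mp h
  choose b hb using hw
  exact mem_char_intVecs.mpr fun i => ⟨m i + b i, by
    simp only [Pi.add_apply, Pi.smul_apply, smul_eq_mul, hm i, hb i]; push_cast; ring⟩

lemma short_intVecs_norm {χ : Fin n → ℚ}
    (h : χ ∈ ShortOf (1 : Matrix (Fin n) (Fin n) ℤ) (intVecs (Fin n))) :
    qform (1 : Matrix (Fin n) (Fin n) ℤ) χ χ = n := by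
  obtain ⟨hc, hmin⟩ := h
  obtain ⟨w, hw, hww⟩ := char_intVecs_diff hc (ones_char (n := n))
  have hones : qform (1 : Matrix (Fin n) (Fin n) ℤ) (fun _ => (1:ℚ)) (fun _ => (1:ℚ)) = n := by
    rw [qform_one]
    unfold dotProduct
    simp
  have hle := hmin _ (ones_char (n := n)) ⟨w, hw, hww⟩
  rw [hones] at hle
  have hge := char_intVecs_min hc
  rw [qform_one]
  rw [qform_one] at hle
  linarith

end Aux

section Sat

variable {n : ℕ}

/-- The coordinatewise cast `(Fin n → ℤ) →ₗ[ℤ] (Fin n → ℚ)`. -/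
def castLM (n : ℕ) : (Fin n → ℤ) →ₗ[ℤ] (Fin n → ℚ) where
  toFun x := fun i => (x i : ℚ)
  map_add' x y := by ext i; simp [Int.cast_add]
  map_smul' c x := by ext i; simp

lemma castLM_inj : Function.Injective (castLM n) := by
  intro x y h
  ext i
  have : ((x i : ℚ)) = (y i : ℚ) := congrFun h i
  exact_mod_cast this

/-- A sublattice of `ℤⁿ` is generated by a finite ℚ-linearly-independent family. -/
lemma lat_basis {S : Set (Fin n → ℚ)} (hlat : IsLat S) (hsub : S ⊆ intVecs (Fin n)) :
    ∃ (k : ℕ) (v : Fin k → (Fin n → ℚ)),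
      (∀ i, v i ∈ S) ∧ LinearIndependent ℚ v ∧
      (∀ x ∈ S, ∃ m : Fin k → ℤ, x = ∑ i, (m i : ℤ) • v i) := by
  classical
  -- S as a ℤ-submodule of Fin n → ℚ
  have h0 : (0 : Fin n → ℚ) ∈ S := hlat.1
  have hsubmem : ∀ x ∈ S, ∀ y ∈ S, x - y ∈ S := hlat.2
  -- the preimage submodule in Fin n → ℤ
  let N : Submodule ℤ (Fin n → ℤ) :=
    { carrier := {x | castLM n x ∈ S}
      add_mem' := by
        intro a b ha hb
        have : castLM n a + castLM n b = castLM n a - (0 - castLM n b) := by ring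
        show castLM n (a + b) ∈ S
        rw [map_add, this]
        exact hsubmem _ ha _ (hsubmem _ h0 _ hb)
      zero_mem' := by show castLM n 0 ∈ S; rw [map_zero]; exact h0
      smul_mem' := by
        intro c x hx
        show castLM n (c • x) ∈ S
        rw [LinearMap.map_smul]
        have key : ∀ c : ℤ, 0 ≤ c → c • castLM n x ∈ S := by
          intro c hc
          induction c using Int.rec with
          | ofNat c =>
            induction c with
            | zero => simpa using h0
            | succ d ih =>
              have hof : (Int.ofNat (d + 1) : ℤ) = Int.ofNat d + 1 := by simp
              rw [hof, add_smul, one_smul]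
              have : Int.ofNat d • castLM n x + castLM n x
                  = Int.ofNat d • castLM n x - (0 - castLM n x) := by ring
              rw [this]
              exact hsubmem _ (ih (by simp [Int.ofNat_eq_natCast])) _ (hsubmem _ h0 _ hx)
          | negSucc c => exact absurd hc (by simp [Int.negSucc_not_nonneg])
        rcases le_or_gt 0 c with hc | hc
        · exact key c hc
        · have : c • castLM n x = 0 - (-c) • castLM n x := by
            rw [neg_smul]; ring
          rw [this]
          exact hsubmem _ h0 _ (key (-c) (by linarith)) }
  obtain ⟨k, b⟩ := Submodule.basisOfPid (Pi.basisFun ℤ (Fin n)) N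
  refine ⟨k, fun i => castLM n (b i), fun i => (b i).2, ?_, ?_⟩
  · rw [← LinearIndependent.iff_fractionRing (R := ℤ) (K := ℚ)]
    have : (fun i => castLM n ((b i : Fin n → ℤ))) = (castLM n ∘ₗ N.subtype) ∘ b := rfl
    rw [this]
    refine b.linearIndependent.map' _ (LinearMap.ker_eq_bot.mpr ?_)
    exact castLM_inj.comp Subtype.val_injective
  · intro x hx
    -- x is integral, so comes from N
    have hxint : x ∈ intVecs (Fin n) := hsub hx
    choose a ha using hxint
    have hxe : x = castLM n a := by ext i; exact ha i
    have haN : a ∈ N := by show castLM n a ∈ S; rw [← hxe]; exact hx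
    have := Module.Basis.sum_repr b ⟨a, haN⟩
    refine ⟨fun i => b.repr ⟨a, haN⟩ i, ?_⟩
    have h2 := congrArg (fun t : N => castLM n (t : Fin n → ℤ)) this
    simp only at h2
    rw [hxe, ← h2, AddSubmonoidClass.coe_finset_sum, map_sum]
    refine Finset.sum_congr rfl fun j _ => ?_
    rw [SetLike.val_smul, map_zsmul]

lemma IsLat.neg_mem' {S : Set (Fin n → ℚ)} (h : IsLat S) {x : Fin n → ℚ} (hx : x ∈ S) :
    -x ∈ S := by
  have := h.2 0 h.1 x hx
  simpa using this

lemma IsLat.add_mem' {S : Set (Fin n → ℚ)} (h : IsLat S) {x y : Fin n → ℚ}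
    (hx : x ∈ S) (hy : y ∈ S) : x + y ∈ S := by
  have := h.2 x hx (-y) (h.neg_mem' hy)
  simpa [sub_neg_eq_add] using this

lemma IsLat.zsmul_mem' {S : Set (Fin n → ℚ)} (h : IsLat S) {x : Fin n → ℚ}
    (hx : x ∈ S) (c : ℤ) : c • x ∈ S := by
  induction c using Int.induction_on with
  | zero => simpa using h.1
  | succ d ih => rw [add_smul, one_smul]; exact h.add_mem' ih hx
  | pred d ih => rw [sub_smul, one_smul]; exact h.2 _ ih _ hx

lemma IsLat.sum_mem' {S : Set (Fin n → ℚ)} (h : IsLat S) {ι : Type*} (s : Finset ι)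
    (f : ι → (Fin n → ℚ)) (hf : ∀ i ∈ s, f i ∈ S) : (∑ i ∈ s, f i) ∈ S := by
  classical
  induction s using Finset.induction_on with
  | empty => simpa using h.1
  | insert _ _ hx ih =>
    rw [Finset.sum_insert hx]
    exact h.add_mem' (hf _ (Finset.mem_insert_self _ _))
      (ih fun i hi => hf i (Finset.mem_insert_of_mem hi))

lemma sum_dotProduct' {k : ℕ} (f : Fin k → (Fin n → ℚ)) (u : Fin n → ℚ) :
    (∑ i, f i) ⬝ᵥ u = ∑ i, f i ⬝ᵥ u := by
  simp only [dotProduct, Finset.sum_apply, Finset.sum_mul]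
  exact Finset.sum_comm

lemma dotProduct_sum' {k : ℕ} (u : Fin n → ℚ) (f : Fin k → (Fin n → ℚ)) :
    u ⬝ᵥ (∑ i, f i) = ∑ i, u ⬝ᵥ f i := by
  rw [dotProduct_comm, sum_dotProduct']
  exact Finset.sum_congr rfl fun i _ => dotProduct_comm _ _

lemma saturation {S : Set (Fin n → ℚ)} (hlat : IsLat S) (hsub : S ⊆ intVecs (Fin n))
    (hprim : PrimitiveIn (1 : Matrix (Fin n) (Fin n) ℤ) (intVecs (Fin n)) S)
    {w : Fin n → ℚ} (hw : w ∈ intVecs (Fin n)) (hws : w ∈ Submodule.span ℚ S) :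
    w ∈ S := by
  classical
  obtain ⟨k, v, hvS, hvind, hvgen⟩ := lat_basis hlat hsub
  have hvgen' : ∀ x ∈ S, ∃ m : Fin k → ℤ, x = ∑ i, ((m i : ℚ)) • v i := by
    intro x hx
    obtain ⟨m, hm⟩ := hvgen x hx
    exact ⟨m, by rw [hm]; exact Finset.sum_congr rfl fun i _ =>
      (Int.cast_smul_eq_zsmul ℚ (m i) (v i)).symm⟩
  set G : Matrix (Fin k) (Fin k) ℚ := Matrix.of (fun i j => v i ⬝ᵥ v j) with hGdef
  have hGmul : ∀ c : Fin k → ℚ, c ⬝ᵥ (G *ᵥ c) = (∑ i, c i • v i) ⬝ᵥ (∑ j, c j • v j) := by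
    intro c
    have hLHS : c ⬝ᵥ (G *ᵥ c) = ∑ i, ∑ j, c i * ((v i ⬝ᵥ v j) * c j) := by
      show ∑ i, c i * (G *ᵥ c) i = _
      refine Finset.sum_congr rfl fun i _ => ?_
      rw [show (G *ᵥ c) i = ∑ j, (v i ⬝ᵥ v j) * c j from rfl, Finset.mul_sum]
    have hRHS : (∑ i, c i • v i) ⬝ᵥ (∑ j, c j • v j)
        = ∑ i, ∑ j, c i * (c j * (v i ⬝ᵥ v j)) := by
      rw [sum_dotProduct']
      refine Finset.sum_congr rfl fun i _ => ?_
      rw [smul_dotProduct, smul_eq_mul, dotProduct_sum', Finset.mul_sum]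
      refine Finset.sum_congr rfl fun j _ => ?_
      rw [dotProduct_smul, smul_eq_mul]
    rw [hLHS, hRHS]
    exact Finset.sum_congr rfl fun i _ => Finset.sum_congr rfl fun j _ => by ring
  have hGinj : Function.Injective G.mulVec := by
    intro c c' hcc
    have hzero : G *ᵥ (c - c') = 0 := by rw [Matrix.mulVec_sub, hcc, sub_self]
    have h0 : (∑ i, (c - c') i • v i) ⬝ᵥ (∑ j, (c - c') j • v j) = 0 := by
      rw [← hGmul, hzero, dotProduct_zero]
    have hsum0 : ∑ i, (c - c') i • v i = 0 := dotProduct_self_eq_zero.mp h0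
    have := Fintype.linearIndependent_iff.mp hvind _ hsum0
    funext i
    have hi := this i
    simp only [Pi.sub_apply] at hi
    linarith [hi]
  have hGunit : IsUnit G := Matrix.mulVec_injective_iff_isUnit.mp hGinj
  have hGiG : G⁻¹ * G = 1 := Matrix.nonsing_inv_mul G ((Matrix.isUnit_iff_isUnit_det G).mp hGunit)
  set bs : Fin k → (Fin n → ℚ) := fun i => ∑ j, G⁻¹ i j • v j with hbsdef
  have hbsv : ∀ i l, bs i ⬝ᵥ v l = if i = l then 1 else 0 := by
    intro i l
    calc bs i ⬝ᵥ v l = ∑ j, G⁻¹ i j * (v j ⬝ᵥ v l) := by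
          rw [hbsdef, sum_dotProduct']
          exact Finset.sum_congr rfl fun j _ => by rw [smul_dotProduct, smul_eq_mul]
      _ = (G⁻¹ * G) i l := by rw [Matrix.mul_apply]; rfl
      _ = (1 : Matrix (Fin k) (Fin k) ℚ) i l := by rw [hGiG]
      _ = if i = l then 1 else 0 := Matrix.one_apply
  have hbs_span : ∀ i, bs i ∈ Submodule.span ℚ S := fun i =>
    Submodule.sum_mem _ fun j _ => Submodule.smul_mem _ _ (Submodule.subset_span (hvS j))
  have hbs_pair : ∀ i, ∀ u ∈ S, ∃ m : ℤ, bs i ⬝ᵥ u = (m : ℚ) := by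
    intro i u hu
    obtain ⟨m, hm⟩ := hvgen' u hu
    refine ⟨m i, ?_⟩
    rw [hm, dotProduct_sum']
    have : ∀ l, bs i ⬝ᵥ ((m l : ℚ) • v l) = if i = l then (m l : ℚ) else 0 := by
      intro l
      rw [dotProduct_smul, smul_eq_mul, hbsv i l]
      split <;> ring
    rw [Finset.sum_congr rfl fun l _ => this l, Finset.sum_ite_eq]
    simp
  have hbs_dual : ∀ i, bs i ∈ dualOf (1 : Matrix (Fin n) (Fin n) ℤ) S := by
    intro i
    refine ⟨hbs_span i, fun u hu => ?_⟩
    rw [qform_one]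
    exact hbs_pair i u hu
  -- lift each dual basis vector to an integer vector
  have hz : ∀ i, ∃ z ∈ intVecs (Fin n), ∀ u ∈ S, z ⬝ᵥ u = bs i ⬝ᵥ u := by
    intro i
    obtain ⟨z, hz1, hz2⟩ := hprim _ (hbs_dual i)
    refine ⟨z, mem_dual_intVecs.mp hz1, fun u hu => ?_⟩
    have := hz2 u hu
    rwa [qform_one, qform_one] at this
  choose z hzint hzpair using hz
  -- pairings with z i and bs i agree on the span of S
  have hpair_span : ∀ i, ∀ t ∈ Submodule.span ℚ S, t ⬝ᵥ z i = t ⬝ᵥ bs i := by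
    intro i t ht
    induction ht using Submodule.span_induction with
    | mem u hu =>
      rw [dotProduct_comm u, dotProduct_comm u, hzpair i u hu]
    | zero => rw [zero_dotProduct, zero_dotProduct]
    | add x y hx hy ihx ihy => rw [add_dotProduct, add_dotProduct, ihx, ihy]
    | smul a x hx ihx => rw [smul_dotProduct, smul_dotProduct, ihx]
  -- w as a rational combination of the v i
  have hSspan : Submodule.span ℚ S ≤ Submodule.span ℚ (Set.range v) := by
    rw [Submodule.span_le]
    intro x hx
    obtain ⟨m, hm⟩ := hvgen' x hx
    rw [hm]
    exact Submodule.sum_mem _ fun i _ =>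
      Submodule.smul_mem _ _ (Submodule.subset_span ⟨i, rfl⟩)
  obtain ⟨c, hc⟩ := (Submodule.mem_span_range_iff_exists_fun ℚ).mp (hSspan hws)
  -- each coefficient is an integer
  have hcint : ∀ i, ∃ m : ℤ, c i = (m : ℚ) := by
    intro i
    have h1 : w ⬝ᵥ bs i = c i := by
      rw [← hc, sum_dotProduct']
      have : ∀ l, (c l • v l) ⬝ᵥ bs i = if i = l then c l else 0 := by
        intro l
        rw [smul_dotProduct, smul_eq_mul, dotProduct_comm, hbsv i l]
        split <;> ring
      rw [Finset.sum_congr rfl fun l _ => this l, Finset.sum_ite_eq]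
      simp
    have h2 : w ⬝ᵥ z i = w ⬝ᵥ bs i := hpair_span i w hws
    obtain ⟨m, hm⟩ := dot_int hw (hzint i)
    exact ⟨m, by rw [← h1, ← h2, hm]⟩
  choose m hm using hcint
  have : w = ∑ i, (m i : ℤ) • v i := by
    rw [← hc]
    exact Finset.sum_congr rfl fun i _ => by
      rw [hm i, Int.cast_smul_eq_zsmul]
  rw [this]
  exact hlat.sum_mem' _ _ fun i _ => hlat.zsmul_mem' (hvS i) (m i)

end Sat
set_option maxHeartbeats 1000000 in
/-- For complementary primitive sublattices `Λ₁, Λ₂ ⊆ ℤⁿ` with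
`Short(ℤⁿ) → Short(Λ₁)` surjective, the rule `φ([r₁ χ]) = [r₂ χ]` gives a
well-defined isomorphism `(C(Λ₁), d₁) → (C(Λ₂), −d₂)`. -/
theorem stmt_10 (n : ℕ) (S₁ S₂ : Set (Fin n → ℚ))
    (h₁ : IsLat S₁) (h₂ : IsLat S₂)
    (hsub₁ : S₁ ⊆ intVecs (Fin n)) (hsub₂ : S₂ ⊆ intVecs (Fin n))
    (hcomp : ComplementaryIn (1 : Matrix (Fin n) (Fin n) ℤ) (intVecs (Fin n)) S₁ S₂)
    (hprim₁ : PrimitiveIn (1 : Matrix (Fin n) (Fin n) ℤ) (intVecs (Fin n)) S₁)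
    (hprim₂ : PrimitiveIn (1 : Matrix (Fin n) (Fin n) ℤ) (intVecs (Fin n)) S₂)
    (hsurj : ∀ ξ ∈ ShortOf (1 : Matrix (Fin n) (Fin n) ℤ) S₁,
      ∃ χ ∈ ShortOf (1 : Matrix (Fin n) (Fin n) ℤ) (intVecs (Fin n)),
        ∀ u ∈ S₁, qform (1 : Matrix (Fin n) (Fin n) ℤ) χ u
          = qform (1 : Matrix (Fin n) (Fin n) ℤ) ξ u) :
    ∃ (Φ : (Fin n → ℚ) → (Fin n → ℚ))
      (ψ : disc (1 : Matrix (Fin n) (Fin n) ℤ) S₁ ≃+ disc (1 : Matrix (Fin n) (Fin n) ℤ) S₂),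
      TorsorMapIso (1 : Matrix (Fin n) (Fin n) ℤ) S₁ (1 : Matrix (Fin n) (Fin n) ℤ) S₂ Φ ψ ∧
      DCompat (1 : Matrix (Fin n) (Fin n) ℤ) S₁ (1 : Matrix (Fin n) (Fin n) ℤ) S₂ (-1) Φ ∧
      (∀ χ ∈ CharOf (1 : Matrix (Fin n) (Fin n) ℤ) (intVecs (Fin n)),
        ∀ ξ₁ ∈ CharOf (1 : Matrix (Fin n) (Fin n) ℤ) S₁,
        ∀ ξ₂ ∈ CharOf (1 : Matrix (Fin n) (Fin n) ℤ) S₂,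
        (∀ u ∈ S₁, qform (1 : Matrix (Fin n) (Fin n) ℤ) χ u
          = qform (1 : Matrix (Fin n) (Fin n) ℤ) ξ₁ u) →
        (∀ u ∈ S₂, qform (1 : Matrix (Fin n) (Fin n) ℤ) χ u
          = qform (1 : Matrix (Fin n) (Fin n) ℤ) ξ₂ u) →
        SameClass S₂ (Φ ξ₁) ξ₂) := by
  classical
  set V₁ : Submodule ℚ (Fin n → ℚ) := Submodule.span ℚ S₁ with hV₁def
  set V₂ : Submodule ℚ (Fin n → ℚ) := Submodule.span ℚ S₂ with hV₂def
  -- orthogonality of the spans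
  have horth : ∀ v ∈ V₁, ∀ w ∈ V₂, v ⬝ᵥ w = 0 := by
    intro v hv
    induction hv using Submodule.span_induction with
    | mem x hx =>
      intro w hw
      induction hw using Submodule.span_induction with
      | mem y hy => have := hcomp.1 x hx y hy; rwa [qform_one] at this
      | zero => rw [dotProduct_zero]
      | add a b _ _ iha ihb => rw [dotProduct_add, iha, ihb, add_zero]
      | smul c a _ iha => rw [dotProduct_smul, iha, smul_zero]
    | zero => intro w hw; rw [zero_dotProduct]
    | add a b _ _ iha ihb => intro w hw; rw [add_dotProduct, iha w hw, ihb w hw, add_zero]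
    | smul c a _ iha => intro w hw; rw [smul_dotProduct, iha w hw, smul_zero]
  -- ranks
  have hrkn : rkOf (intVecs (Fin n)) = n := by
    unfold rkOf
    rw [span_intVecs, finrank_top]
    simp [Module.finrank_pi]
  have hrk12 : Module.finrank ℚ V₁ + Module.finrank ℚ V₂ = n := by
    have := hcomp.2
    rw [hrkn] at this
    exact this
  have hdisj : Disjoint V₁ V₂ := by
    rw [Submodule.disjoint_def]
    intro x hx1 hx2
    exact dotProduct_self_eq_zero.mp (horth x hx1 x hx2)
  have hcompl : IsCompl V₁ V₂ := by
    refine ⟨hdisj, codisjoint_iff.mpr ?_⟩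
    apply Submodule.eq_top_of_finrank_eq
    have h1 := Submodule.finrank_sup_add_finrank_inf_eq V₁ V₂
    rw [hdisj.eq_bot, finrank_bot] at h1
    have h2 : Module.finrank ℚ (Fin n → ℚ) = n := by simp [Module.finrank_pi]
    omega
  have hsup : V₁ ⊔ V₂ = ⊤ := hcompl.sup_eq_top
  -- projections
  set π : (Fin n → ℚ) →ₗ[ℚ] V₁ := Submodule.linearProjOfIsCompl V₁ V₂ hcompl with hπdef
  set π₁ : (Fin n → ℚ) → (Fin n → ℚ) := fun x => ↑(π x) with hπ₁def
  set π₂ : (Fin n → ℚ) → (Fin n → ℚ) := fun x => x - π₁ x with hπ₂def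
  have hπ₁mem : ∀ x, π₁ x ∈ V₁ := fun x => (π x).2
  have hπ₁₂ : ∀ x, x = π₁ x + π₂ x := fun x => by rw [hπ₂def]; ring
  have hπ₁add : ∀ x y, π₁ (x + y) = π₁ x + π₁ y := fun x y => by
    rw [hπ₁def]; simp only [map_add]; rfl
  have hπ₁smul : ∀ (c : ℚ) x, π₁ (c • x) = c • π₁ x := fun c x => by
    show (↑(π (c • x)) : Fin n → ℚ) = c • ↑(π x)
    rw [LinearMap.map_smul]
    rfl
  have hπ₁left : ∀ x ∈ V₁, π₁ x = x := by
    intro x hx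
    have h := Submodule.linearProjOfIsCompl_apply_left hcompl ⟨x, hx⟩
    have : π₁ x = ↑(π x) := rfl
    rw [this, hπdef]; exact congrArg Subtype.val h
  have hπ₁right : ∀ x ∈ V₂, π₁ x = 0 := by
    intro x hx
    have h := Submodule.projectionOnto_apply_of_mem_right hcompl hx
    have : π₁ x = ↑(π x) := rfl
    rw [this, hπdef]; exact congrArg Subtype.val h
  have hπ₂mem : ∀ x, π₂ x ∈ V₂ := by
    intro x
    have hx : x ∈ V₁ ⊔ V₂ := by rw [hsup]; trivial
    obtain ⟨a, ha, b, hb, hab⟩ := Submodule.mem_sup.mp hx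
    have : π₁ x = a := by
      rw [← hab, hπ₁add, hπ₁left a ha, hπ₁right b hb, add_zero]
    rw [hπ₂def]
    simp only
    rw [this, ← hab]
    simpa using hb
  have hπ₂add : ∀ x y, π₂ (x + y) = π₂ x + π₂ y := fun x y => by
    rw [hπ₂def]; simp only [hπ₁add]; ring
  have hπ₂smul : ∀ (c : ℚ) x, π₂ (c • x) = c • π₂ x := fun c x => by
    rw [hπ₂def]; simp only [hπ₁smul]; module
  have hπ₂left : ∀ x ∈ V₁, π₂ x = 0 := fun x hx => by
    rw [hπ₂def]; simp only [hπ₁left x hx]; ring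
  have hπ₂right : ∀ x ∈ V₂, π₂ x = x := fun x hx => by
    rw [hπ₂def]; simp only [hπ₁right x hx]; ring
  -- pairing extension and uniqueness
  have hdotspan₁ : ∀ d, (∀ u ∈ S₁, d ⬝ᵥ u = 0) → ∀ t ∈ V₁, d ⬝ᵥ t = 0 := by
    intro d hd t ht
    induction ht using Submodule.span_induction with
    | mem x hx => exact hd x hx
    | zero => rw [dotProduct_zero]
    | add a b _ _ iha ihb => rw [dotProduct_add, iha, ihb, add_zero]
    | smul c a _ iha => rw [dotProduct_smul, iha, smul_zero]
  have hdotspan₂ : ∀ d, (∀ u ∈ S₂, d ⬝ᵥ u = 0) → ∀ t ∈ V₂, d ⬝ᵥ t = 0 := by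
    intro d hd t ht
    induction ht using Submodule.span_induction with
    | mem x hx => exact hd x hx
    | zero => rw [dotProduct_zero]
    | add a b _ _ iha ihb => rw [dotProduct_add, iha, ihb, add_zero]
    | smul c a _ iha => rw [dotProduct_smul, iha, smul_zero]
  have hext₁ : ∀ v ∈ V₁, ∀ v' ∈ V₁, (∀ u ∈ S₁, v ⬝ᵥ u = v' ⬝ᵥ u) → v = v' := by
    intro v hv v' hv' hvv
    have hd : ∀ u ∈ S₁, (v - v') ⬝ᵥ u = 0 := fun u hu => by
      rw [sub_dotProduct, hvv u hu, sub_self]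
    have := hdotspan₁ (v - v') hd (v - v') (Submodule.sub_mem _ hv hv')
    have h0 : v - v' = 0 := dotProduct_self_eq_zero.mp this
    linear_combination (norm := abel) h0
  have hext₂ : ∀ v ∈ V₂, ∀ v' ∈ V₂, (∀ u ∈ S₂, v ⬝ᵥ u = v' ⬝ᵥ u) → v = v' := by
    intro v hv v' hv' hvv
    have hd : ∀ u ∈ S₂, (v - v') ⬝ᵥ u = 0 := fun u hu => by
      rw [sub_dotProduct, hvv u hu, sub_self]
    have := hdotspan₂ (v - v') hd (v - v') (Submodule.sub_mem _ hv hv')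
    have h0 : v - v' = 0 := dotProduct_self_eq_zero.mp this
    linear_combination (norm := abel) h0
  -- projections preserve pairings with the sublattices
  have hπ₁dot : ∀ z, ∀ u ∈ S₁, π₁ z ⬝ᵥ u = z ⬝ᵥ u := by
    intro z u hu
    have h2 : π₂ z ⬝ᵥ u = 0 := by
      rw [dotProduct_comm]
      exact horth u (Submodule.subset_span hu) _ (hπ₂mem z)
    calc π₁ z ⬝ᵥ u = (π₁ z + π₂ z) ⬝ᵥ u - π₂ z ⬝ᵥ u := by rw [add_dotProduct]; ring
    _ = z ⬝ᵥ u := by rw [← hπ₁₂ z, h2]; ring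
  have hπ₂dot : ∀ z, ∀ u ∈ S₂, π₂ z ⬝ᵥ u = z ⬝ᵥ u := by
    intro z u hu
    have h2 : π₁ z ⬝ᵥ u = 0 := horth _ (hπ₁mem z) u (Submodule.subset_span hu)
    calc π₂ z ⬝ᵥ u = (π₁ z + π₂ z) ⬝ᵥ u - π₁ z ⬝ᵥ u := by rw [add_dotProduct]; ring
    _ = z ⬝ᵥ u := by rw [← hπ₁₂ z, h2]; ring
  -- saturation
  have hsat₁ : ∀ w ∈ intVecs (Fin n), w ∈ V₁ → w ∈ S₁ := fun w hw hws =>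
    saturation h₁ hsub₁ hprim₁ hw hws
  have hsat₂ : ∀ w ∈ intVecs (Fin n), w ∈ V₂ → w ∈ S₂ := fun w hw hws =>
    saturation h₂ hsub₂ hprim₂ hw hws
  have hsat₂' : ∀ w ∈ intVecs (Fin n), π₁ w = 0 → w ∈ S₂ := by
    intro w hw h0
    refine hsat₂ w hw ?_
    have := hπ₁₂ w
    rw [h0, zero_add] at this
    rw [this]
    exact hπ₂mem w
  have hsat₁' : ∀ w ∈ intVecs (Fin n), π₂ w = 0 → w ∈ S₁ := by
    intro w hw h0
    refine hsat₁ w hw ?_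
    have := hπ₁₂ w
    rw [h0, add_zero] at this
    rw [this]
    exact hπ₁mem w
  -- dual membership helpers
  have hdualmk₁ : ∀ x, x ∈ V₁ → (∀ u ∈ S₁, isInt (x ⬝ᵥ u)) →
      x ∈ dualOf (1 : Matrix (Fin n) (Fin n) ℤ) S₁ := by
    intro x h1 h2
    exact ⟨h1, fun y hy => by rw [qform_one]; exact h2 y hy⟩
  have hdualmk₂ : ∀ x, x ∈ V₂ → (∀ u ∈ S₂, isInt (x ⬝ᵥ u)) →
      x ∈ dualOf (1 : Matrix (Fin n) (Fin n) ℤ) S₂ := by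
    intro x h1 h2
    exact ⟨h1, fun y hy => by rw [qform_one]; exact h2 y hy⟩
  have hπ₁dual : ∀ z ∈ intVecs (Fin n), π₁ z ∈ dualOf (1 : Matrix (Fin n) (Fin n) ℤ) S₁ := by
    intro z hz
    refine hdualmk₁ _ (hπ₁mem z) fun u hu => ?_
    rw [hπ₁dot z u hu]
    exact dot_int hz (hsub₁ hu)
  have hπ₂dual : ∀ z ∈ intVecs (Fin n), π₂ z ∈ dualOf (1 : Matrix (Fin n) (Fin n) ℤ) S₂ := by
    intro z hz
    refine hdualmk₂ _ (hπ₂mem z) fun u hu => ?_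
    rw [hπ₂dot z u hu]
    exact dot_int hz (hsub₂ hu)
  -- lifting dual vectors to integer vectors
  have hlift₁ : ∀ x ∈ dualOf (1 : Matrix (Fin n) (Fin n) ℤ) S₁,
      ∃ z ∈ intVecs (Fin n), π₁ z = x := by
    intro x hx
    obtain ⟨z, hz1, hz2⟩ := hprim₁ x hx
    have hzint : z ∈ intVecs (Fin n) := mem_dual_intVecs.mp hz1
    refine ⟨z, hzint, ?_⟩
    refine hext₁ _ (hπ₁mem z) _ hx.1 fun u hu => ?_
    rw [hπ₁dot z u hu]
    have := hz2 u hu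
    rwa [qform_one, qform_one] at this
  have hlift₂ : ∀ x ∈ dualOf (1 : Matrix (Fin n) (Fin n) ℤ) S₂,
      ∃ z ∈ intVecs (Fin n), π₂ z = x := by
    intro x hx
    obtain ⟨z, hz1, hz2⟩ := hprim₂ x hx
    have hzint : z ∈ intVecs (Fin n) := mem_dual_intVecs.mp hz1
    refine ⟨z, hzint, ?_⟩
    refine hext₂ _ (hπ₂mem z) _ hx.1 fun u hu => ?_
    rw [hπ₂dot z u hu]
    have := hz2 u hu
    rwa [qform_one, qform_one] at this
  -- projections of characteristic vectors
  have hcharint : ∀ χ ∈ CharOf (1 : Matrix (Fin n) (Fin n) ℤ) (intVecs (Fin n)),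
      χ ∈ intVecs (Fin n) := fun χ hχ => mem_dual_intVecs.mp hχ.1
  have hcharπ₁ : ∀ χ ∈ CharOf (1 : Matrix (Fin n) (Fin n) ℤ) (intVecs (Fin n)),
      π₁ χ ∈ CharOf (1 : Matrix (Fin n) (Fin n) ℤ) S₁ := by
    intro χ hχ
    refine ⟨hπ₁dual χ (hcharint χ hχ), fun u hu => ?_⟩
    obtain ⟨m, hm⟩ := hχ.2 u (hsub₁ hu)
    refine ⟨m, ?_⟩
    rw [qform_one, qform_one, hπ₁dot χ u hu]
    rwa [qform_one, qform_one] at hm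
  have hcharπ₂ : ∀ χ ∈ CharOf (1 : Matrix (Fin n) (Fin n) ℤ) (intVecs (Fin n)),
      π₂ χ ∈ CharOf (1 : Matrix (Fin n) (Fin n) ℤ) S₂ := by
    intro χ hχ
    refine ⟨hπ₂dual χ (hcharint χ hχ), fun u hu => ?_⟩
    obtain ⟨m, hm⟩ := hχ.2 u (hsub₂ hu)
    refine ⟨m, ?_⟩
    rw [qform_one, qform_one, hπ₂dot χ u hu]
    rwa [qform_one, qform_one] at hm
  -- lifting characteristic covectors
  have hcharV₁ : ∀ ξ ∈ CharOf (1 : Matrix (Fin n) (Fin n) ℤ) S₁, ξ ∈ V₁ :=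
    fun ξ hξ => hξ.1.1
  have hcharV₂ : ∀ ξ ∈ CharOf (1 : Matrix (Fin n) (Fin n) ℤ) S₂, ξ ∈ V₂ :=
    fun ξ hξ => hξ.1.1
  have hcharlift₁ : ∀ ξ ∈ CharOf (1 : Matrix (Fin n) (Fin n) ℤ) S₁,
      ∃ χ ∈ CharOf (1 : Matrix (Fin n) (Fin n) ℤ) (intVecs (Fin n)), π₁ χ = ξ := by
    intro ξ hξ
    set o : Fin n → ℚ := fun _ => 1 with hodef
    have ho : o ∈ CharOf (1 : Matrix (Fin n) (Fin n) ℤ) (intVecs (Fin n)) := ones_char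
    have hoint : o ∈ intVecs (Fin n) := hcharint o ho
    set x : Fin n → ℚ := (2 : ℚ)⁻¹ • (ξ - π₁ o) with hxdef
    have hxdual : x ∈ dualOf (1 : Matrix (Fin n) (Fin n) ℤ) S₁ := by
      refine hdualmk₁ _ ?_ ?_
      · exact Submodule.smul_mem _ _ (Submodule.sub_mem _ (hcharV₁ ξ hξ) (hπ₁mem o))
      · intro u hu
        obtain ⟨m₁, hm₁⟩ := hξ.2 u hu
        obtain ⟨m₂, hm₂⟩ := ho.2 u (hsub₁ hu)
        rw [qform_one, qform_one] at hm₁ hm₂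
        refine ⟨m₁ - m₂, ?_⟩
        rw [hxdef, smul_dotProduct, sub_dotProduct, hπ₁dot o u hu]
        push_cast
        have h2 : ξ ⬝ᵥ u - o ⬝ᵥ u = 2 * m₁ - 2 * m₂ := by linarith
        rw [smul_eq_mul]
        rw [show ξ ⬝ᵥ u - o ⬝ᵥ u = 2 * (m₁ : ℚ) - 2 * m₂ from h2]
        ring
    obtain ⟨z, hzint, hzπ⟩ := hlift₁ x hxdual
    refine ⟨o + (2 : ℚ) • z, char_intVecs_add_two_smul ho hzint, ?_⟩
    rw [hπ₁add, hπ₁smul, hzπ, hxdef]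
    ext i
    simp only [Pi.add_apply, Pi.smul_apply, Pi.sub_apply, smul_eq_mul]
    ring
  have hcharlift₂ : ∀ ξ ∈ CharOf (1 : Matrix (Fin n) (Fin n) ℤ) S₂,
      ∃ χ ∈ CharOf (1 : Matrix (Fin n) (Fin n) ℤ) (intVecs (Fin n)), π₂ χ = ξ := by
    intro ξ hξ
    set o : Fin n → ℚ := fun _ => 1 with hodef
    have ho : o ∈ CharOf (1 : Matrix (Fin n) (Fin n) ℤ) (intVecs (Fin n)) := ones_char
    have hoint : o ∈ intVecs (Fin n) := hcharint o ho
    set x : Fin n → ℚ := (2 : ℚ)⁻¹ • (ξ - π₂ o) with hxdef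
    have hxdual : x ∈ dualOf (1 : Matrix (Fin n) (Fin n) ℤ) S₂ := by
      refine hdualmk₂ _ ?_ ?_
      · exact Submodule.smul_mem _ _ (Submodule.sub_mem _ (hcharV₂ ξ hξ) (hπ₂mem o))
      · intro u hu
        obtain ⟨m₁, hm₁⟩ := hξ.2 u hu
        obtain ⟨m₂, hm₂⟩ := ho.2 u (hsub₂ hu)
        rw [qform_one, qform_one] at hm₁ hm₂
        refine ⟨m₁ - m₂, ?_⟩
        rw [hxdef, smul_dotProduct, sub_dotProduct, hπ₂dot o u hu]
        push_cast
        have h2 : ξ ⬝ᵥ u - o ⬝ᵥ u = 2 * m₁ - 2 * m₂ := by linarith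
        rw [smul_eq_mul]
        rw [show ξ ⬝ᵥ u - o ⬝ᵥ u = 2 * (m₁ : ℚ) - 2 * m₂ from h2]
        ring
    obtain ⟨z, hzint, hzπ⟩ := hlift₂ x hxdual
    refine ⟨o + (2 : ℚ) • z, char_intVecs_add_two_smul ho hzint, ?_⟩
    rw [hπ₂add, hπ₂smul, hzπ, hxdef]
    ext i
    simp only [Pi.add_apply, Pi.smul_apply, Pi.sub_apply, smul_eq_mul]
    ring
  -- norm splitting
  have hsplit : ∀ a ∈ V₁, ∀ b ∈ V₂, (a + b) ⬝ᵥ (a + b) = a ⬝ᵥ a + b ⬝ᵥ b := by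
    intro a ha b hb
    have h1 : a ⬝ᵥ b = 0 := horth a ha b hb
    have h2 : b ⬝ᵥ a = 0 := by rw [dotProduct_comm]; exact h1
    rw [add_dotProduct, dotProduct_add, dotProduct_add, h1, h2]
    ring
  -- the glue map
  have hgex : ∀ ξ : Fin n → ℚ, ∃ χ, ξ ∈ CharOf (1 : Matrix (Fin n) (Fin n) ℤ) S₁ →
      (χ ∈ CharOf (1 : Matrix (Fin n) (Fin n) ℤ) (intVecs (Fin n)) ∧ π₁ χ = ξ) := by
    intro ξ
    by_cases h : ξ ∈ CharOf (1 : Matrix (Fin n) (Fin n) ℤ) S₁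
    · obtain ⟨χ, hχ, hπ⟩ := hcharlift₁ ξ h
      exact ⟨χ, fun _ => ⟨hχ, hπ⟩⟩
    · exact ⟨0, fun hh => absurd hh h⟩
  choose g hg using hgex
  set Φ : (Fin n → ℚ) → (Fin n → ℚ) := fun ξ => π₂ (g ξ) with hΦdef
  -- the lift maps (choice form)
  have hLex₁ : ∀ x : Fin n → ℚ, ∃ z, x ∈ dualOf (1 : Matrix (Fin n) (Fin n) ℤ) S₁ →
      (z ∈ intVecs (Fin n) ∧ π₁ z = x) := by
    intro x
    by_cases h : x ∈ dualOf (1 : Matrix (Fin n) (Fin n) ℤ) S₁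
    · obtain ⟨z, hz, hπ⟩ := hlift₁ x h
      exact ⟨z, fun _ => ⟨hz, hπ⟩⟩
    · exact ⟨0, fun hh => absurd hh h⟩
  choose L₁ hL₁ using hLex₁
  have hLex₂ : ∀ x : Fin n → ℚ, ∃ z, x ∈ dualOf (1 : Matrix (Fin n) (Fin n) ℤ) S₂ →
      (z ∈ intVecs (Fin n) ∧ π₂ z = x) := by
    intro x
    by_cases h : x ∈ dualOf (1 : Matrix (Fin n) (Fin n) ℤ) S₂
    · obtain ⟨z, hz, hπ⟩ := hlift₂ x h
      exact ⟨z, fun _ => ⟨hz, hπ⟩⟩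
    · exact ⟨0, fun hh => absurd hh h⟩
  choose L₂ hL₂ using hLex₂
  -- quotient equality helpers
  have hmkeq₁ : ∀ (a b : dualOf (1 : Matrix (Fin n) (Fin n) ℤ) S₁),
      ((b : Fin n → ℚ) - a ∈ S₁) →
      (QuotientAddGroup.mk a : disc (1 : Matrix (Fin n) (Fin n) ℤ) S₁)
        = QuotientAddGroup.mk b := by
    intro a b hab
    refine QuotientAddGroup.eq.mpr ?_
    apply AddSubgroup.subset_closure
    show ((-a + b : dualOf (1 : Matrix (Fin n) (Fin n) ℤ) S₁) : Fin n → ℚ) ∈ S₁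
    have : ((-a + b : dualOf (1 : Matrix (Fin n) (Fin n) ℤ) S₁) : Fin n → ℚ)
        = (b : Fin n → ℚ) - a := by
      push_cast
      ring
    rw [this]
    exact hab
  have hmkeq₂ : ∀ (a b : dualOf (1 : Matrix (Fin n) (Fin n) ℤ) S₂),
      ((b : Fin n → ℚ) - a ∈ S₂) →
      (QuotientAddGroup.mk a : disc (1 : Matrix (Fin n) (Fin n) ℤ) S₂)
        = QuotientAddGroup.mk b := by
    intro a b hab
    refine QuotientAddGroup.eq.mpr ?_
    apply AddSubgroup.subset_closure
    show ((-a + b : dualOf (1 : Matrix (Fin n) (Fin n) ℤ) S₂) : Fin n → ℚ) ∈ S₂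
    have : ((-a + b : dualOf (1 : Matrix (Fin n) (Fin n) ℤ) S₂) : Fin n → ℚ)
        = (b : Fin n → ℚ) - a := by
      push_cast
      ring
    rw [this]
    exact hab
  -- subtraction forms of the projections
  have hπ₁sub : ∀ x y, π₁ (x - y) = π₁ x - π₁ y := by
    intro x y
    have h := hπ₁add (x - y) y
    rw [sub_add_cancel] at h
    rw [h]
    abel
  have hπ₂sub : ∀ x y, π₂ (x - y) = π₂ x - π₂ y := by
    intro x y
    have h := hπ₂add (x - y) y
    rw [sub_add_cancel] at h
    rw [h]
    abel
  -- differences of lifts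
  have hdiff₂ : ∀ z z', z ∈ intVecs (Fin n) → z' ∈ intVecs (Fin n) → π₁ z = π₁ z' →
      π₂ z - π₂ z' ∈ S₂ := by
    intro z z' hz hz' hπ
    have hw : z - z' ∈ intVecs (Fin n) := intVecs_sub hz hz'
    have h0 : π₁ (z - z') = 0 := by rw [hπ₁sub, hπ, sub_self]
    have hS : z - z' ∈ S₂ := hsat₂' _ hw h0
    have : π₂ z - π₂ z' = z - z' := by
      rw [← hπ₂sub]
      have := hπ₁₂ (z - z')
      rw [h0, zero_add] at this
      exact this.symm
    rwa [this]
  have hdiff₁ : ∀ z z', z ∈ intVecs (Fin n) → z' ∈ intVecs (Fin n) → π₂ z = π₂ z' →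
      π₁ z - π₁ z' ∈ S₁ := by
    intro z z' hz hz' hπ
    have hw : z - z' ∈ intVecs (Fin n) := intVecs_sub hz hz'
    have h0 : π₂ (z - z') = 0 := by rw [hπ₂sub, hπ, sub_self]
    have hS : z - z' ∈ S₁ := hsat₁' _ hw h0
    have : π₁ z - π₁ z' = z - z' := by
      rw [← hπ₁sub]
      have := hπ₁₂ (z - z')
      rw [h0, add_zero] at this
      exact this.symm
    rwa [this]
  -- the forward map on dual vectors
  have hF₁mem : ∀ x : dualOf (1 : Matrix (Fin n) (Fin n) ℤ) S₁,
      π₂ (L₁ (x : Fin n → ℚ)) ∈ dualOf (1 : Matrix (Fin n) (Fin n) ℤ) S₂ :=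
    fun x => hπ₂dual _ ((hL₁ _ x.2).1)
  set F₁ : dualOf (1 : Matrix (Fin n) (Fin n) ℤ) S₁ → disc (1 : Matrix (Fin n) (Fin n) ℤ) S₂ :=
    fun x => QuotientAddGroup.mk ⟨π₂ (L₁ (x : Fin n → ℚ)), hF₁mem x⟩ with hF₁def
  have hL₁π : ∀ x : dualOf (1 : Matrix (Fin n) (Fin n) ℤ) S₁,
      π₁ (L₁ (x : Fin n → ℚ)) = (x : Fin n → ℚ) := fun x => (hL₁ _ x.2).2
  have hL₁int : ∀ x : dualOf (1 : Matrix (Fin n) (Fin n) ℤ) S₁,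
      L₁ (x : Fin n → ℚ) ∈ intVecs (Fin n) := fun x => (hL₁ _ x.2).1
  have hF₁add : ∀ x y, F₁ (x + y) = F₁ x + F₁ y := by
    intro x y
    have hsum : F₁ x + F₁ y
        = QuotientAddGroup.mk (⟨π₂ (L₁ (x : Fin n → ℚ)), hF₁mem x⟩
            + ⟨π₂ (L₁ (y : Fin n → ℚ)), hF₁mem y⟩) := rfl
    rw [hsum]
    apply hmkeq₂
    show (π₂ (L₁ (x : Fin n → ℚ)) + π₂ (L₁ (y : Fin n → ℚ)))
        - π₂ (L₁ ((x + y : dualOf (1 : Matrix (Fin n) (Fin n) ℤ) S₁) : Fin n → ℚ)) ∈ S₂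
    rw [← hπ₂add]
    apply hdiff₂ _ _ (intVecs_add (hL₁int x) (hL₁int y)) (hL₁int (x + y))
    rw [hπ₁add, hL₁π x, hL₁π y, hL₁π (x + y)]
    rfl
  have hF₂mem : ∀ x : dualOf (1 : Matrix (Fin n) (Fin n) ℤ) S₂,
      π₁ (L₂ (x : Fin n → ℚ)) ∈ dualOf (1 : Matrix (Fin n) (Fin n) ℤ) S₁ :=
    fun x => hπ₁dual _ ((hL₂ _ x.2).1)
  set F₂ : dualOf (1 : Matrix (Fin n) (Fin n) ℤ) S₂ → disc (1 : Matrix (Fin n) (Fin n) ℤ) S₁ :=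
    fun x => QuotientAddGroup.mk ⟨π₁ (L₂ (x : Fin n → ℚ)), hF₂mem x⟩ with hF₂def
  have hL₂π : ∀ x : dualOf (1 : Matrix (Fin n) (Fin n) ℤ) S₂,
      π₂ (L₂ (x : Fin n → ℚ)) = (x : Fin n → ℚ) := fun x => (hL₂ _ x.2).2
  have hL₂int : ∀ x : dualOf (1 : Matrix (Fin n) (Fin n) ℤ) S₂,
      L₂ (x : Fin n → ℚ) ∈ intVecs (Fin n) := fun x => (hL₂ _ x.2).1
  have hF₂add : ∀ x y, F₂ (x + y) = F₂ x + F₂ y := by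
    intro x y
    have hsum : F₂ x + F₂ y
        = QuotientAddGroup.mk (⟨π₁ (L₂ (x : Fin n → ℚ)), hF₂mem x⟩
            + ⟨π₁ (L₂ (y : Fin n → ℚ)), hF₂mem y⟩) := rfl
    rw [hsum]
    apply hmkeq₁
    show (π₁ (L₂ (x : Fin n → ℚ)) + π₁ (L₂ (y : Fin n → ℚ)))
        - π₁ (L₂ ((x + y : dualOf (1 : Matrix (Fin n) (Fin n) ℤ) S₂) : Fin n → ℚ)) ∈ S₁
    rw [← hπ₁add]
    apply hdiff₁ _ _ (intVecs_add (hL₂int x) (hL₂int y)) (hL₂int (x + y))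
    rw [hπ₂add, hL₂π x, hL₂π y, hL₂π (x + y)]
    rfl
  -- the homomorphisms
  set f₁ : dualOf (1 : Matrix (Fin n) (Fin n) ℤ) S₁ →+ disc (1 : Matrix (Fin n) (Fin n) ℤ) S₂ :=
    AddMonoidHom.mk' F₁ hF₁add with hf₁def
  set f₂ : dualOf (1 : Matrix (Fin n) (Fin n) ℤ) S₂ →+ disc (1 : Matrix (Fin n) (Fin n) ℤ) S₁ :=
    AddMonoidHom.mk' F₂ hF₂add with hf₂def
  have hker₁ : ∀ x ∈ latIn (1 : Matrix (Fin n) (Fin n) ℤ) S₁, f₁ x = 0 := by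
    have hle : latIn (1 : Matrix (Fin n) (Fin n) ℤ) S₁ ≤ f₁.ker := by
      rw [latIn]
      refine (AddSubgroup.closure_le _).mpr ?_
      intro x hx
      have hxS : (x : Fin n → ℚ) ∈ S₁ := hx
      rw [SetLike.mem_coe, AddMonoidHom.mem_ker]
      show F₁ x = 0
      have h0 : (0 : disc (1 : Matrix (Fin n) (Fin n) ℤ) S₂)
          = QuotientAddGroup.mk 0 := rfl
      rw [hF₁def]
      simp only
      rw [h0]
      refine (hmkeq₂ _ _ ?_).symm
      show π₂ (L₁ (x : Fin n → ℚ)) - (0 : Fin n → ℚ) ∈ S₂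
      rw [sub_zero]
      have hd : π₂ (L₁ (x : Fin n → ℚ)) - π₂ (x : Fin n → ℚ) ∈ S₂ := by
        apply hdiff₂ _ _ (hL₁int x) (hsub₁ hxS)
        rw [hL₁π x, hπ₁left _ (Submodule.subset_span hxS)]
      rwa [hπ₂left _ (Submodule.subset_span hxS), sub_zero] at hd
    exact fun x hx => hle hx
  have hker₂ : ∀ x ∈ latIn (1 : Matrix (Fin n) (Fin n) ℤ) S₂, f₂ x = 0 := by
    have hle : latIn (1 : Matrix (Fin n) (Fin n) ℤ) S₂ ≤ f₂.ker := by
      rw [latIn]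
      refine (AddSubgroup.closure_le _).mpr ?_
      intro x hx
      have hxS : (x : Fin n → ℚ) ∈ S₂ := hx
      rw [SetLike.mem_coe, AddMonoidHom.mem_ker]
      show F₂ x = 0
      have h0 : (0 : disc (1 : Matrix (Fin n) (Fin n) ℤ) S₁)
          = QuotientAddGroup.mk 0 := rfl
      rw [hF₂def]
      simp only
      rw [h0]
      refine (hmkeq₁ _ _ ?_).symm
      show π₁ (L₂ (x : Fin n → ℚ)) - (0 : Fin n → ℚ) ∈ S₁
      rw [sub_zero]
      have hd : π₁ (L₂ (x : Fin n → ℚ)) - π₁ (x : Fin n → ℚ) ∈ S₁ := by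
        apply hdiff₁ _ _ (hL₂int x) (hsub₂ hxS)
        rw [hL₂π x, hπ₂right _ (Submodule.subset_span hxS)]
      rwa [hπ₁right _ (Submodule.subset_span hxS), sub_zero] at hd
    exact fun x hx => hle hx
  set ψ₁ : disc (1 : Matrix (Fin n) (Fin n) ℤ) S₁ →+ disc (1 : Matrix (Fin n) (Fin n) ℤ) S₂ :=
    QuotientAddGroup.lift _ f₁ hker₁ with hψ₁def
  set ψ₂ : disc (1 : Matrix (Fin n) (Fin n) ℤ) S₂ →+ disc (1 : Matrix (Fin n) (Fin n) ℤ) S₁ :=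
    QuotientAddGroup.lift _ f₂ hker₂ with hψ₂def
  have hψ₁mk : ∀ x, ψ₁ (QuotientAddGroup.mk x) = F₁ x := fun x => rfl
  have hψ₂mk : ∀ x, ψ₂ (QuotientAddGroup.mk x) = F₂ x := fun x => rfl
  have hleft : ∀ q : disc (1 : Matrix (Fin n) (Fin n) ℤ) S₁, ψ₂ (ψ₁ q) = q := by
    intro q
    refine QuotientAddGroup.induction_on q fun x => ?_
    rw [hψ₁mk]
    have hFx : F₁ x = QuotientAddGroup.mk ⟨π₂ (L₁ (x : Fin n → ℚ)), hF₁mem x⟩ := rfl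
    rw [hFx, hψ₂mk]
    have hF2 : F₂ ⟨π₂ (L₁ (x : Fin n → ℚ)), hF₁mem x⟩
        = QuotientAddGroup.mk ⟨π₁ (L₂ (π₂ (L₁ (x : Fin n → ℚ)))), hF₂mem ⟨π₂ (L₁ (x : Fin n → ℚ)), hF₁mem x⟩⟩ := rfl
    rw [hF2]
    apply hmkeq₁
    show (x : Fin n → ℚ) - π₁ (L₂ (π₂ (L₁ (x : Fin n → ℚ)))) ∈ S₁
    have hd : π₁ (L₁ (x : Fin n → ℚ)) - π₁ (L₂ (π₂ (L₁ (x : Fin n → ℚ)))) ∈ S₁ := by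
      apply hdiff₁ _ _ (hL₁int x) (hL₂ _ (hF₁mem x)).1
      rw [(hL₂ _ (hF₁mem x)).2]
    rwa [hL₁π x] at hd
  have hright : ∀ q : disc (1 : Matrix (Fin n) (Fin n) ℤ) S₂, ψ₁ (ψ₂ q) = q := by
    intro q
    refine QuotientAddGroup.induction_on q fun x => ?_
    rw [hψ₂mk]
    have hFx : F₂ x = QuotientAddGroup.mk ⟨π₁ (L₂ (x : Fin n → ℚ)), hF₂mem x⟩ := rfl
    rw [hFx, hψ₁mk]
    have hF1 : F₁ ⟨π₁ (L₂ (x : Fin n → ℚ)), hF₂mem x⟩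
        = QuotientAddGroup.mk ⟨π₂ (L₁ (π₁ (L₂ (x : Fin n → ℚ)))), hF₁mem ⟨π₁ (L₂ (x : Fin n → ℚ)), hF₂mem x⟩⟩ := rfl
    rw [hF1]
    apply hmkeq₂
    show (x : Fin n → ℚ) - π₂ (L₁ (π₁ (L₂ (x : Fin n → ℚ)))) ∈ S₂
    have hd : π₂ (L₂ (x : Fin n → ℚ)) - π₂ (L₁ (π₁ (L₂ (x : Fin n → ℚ)))) ∈ S₂ := by
      apply hdiff₂ _ _ (hL₂int x) (hL₁ _ (hF₂mem x)).1
      rw [(hL₁ _ (hF₂mem x)).2]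
    rwa [hL₂π x] at hd
  set ψ : disc (1 : Matrix (Fin n) (Fin n) ℤ) S₁ ≃+ disc (1 : Matrix (Fin n) (Fin n) ℤ) S₂ :=
    { toFun := ⇑ψ₁, invFun := ⇑ψ₂, left_inv := hleft, right_inv := hright,
      map_add' := map_add ψ₁ } with hψdef
  have hψapp : ∀ qq, ψ qq = ψ₁ qq := fun _ => rfl
  have htwo : ∀ a b : Fin n → ℚ, (2 : ℚ) • a = (2 : ℚ) • b → a = b := fun a b h =>
    smul_right_injective _ (by norm_num : (2 : ℚ) ≠ 0) h
  have hrkOf₁ : rkOf S₁ = Module.finrank ℚ V₁ := rfl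
  have hrkOf₂ : rkOf S₂ = Module.finrank ℚ V₂ := rfl
  have hrkq : (rkOf S₁ : ℚ) + (rkOf S₂ : ℚ) = (n : ℚ) := by
    have h : rkOf S₁ + rkOf S₂ = n := by rw [hrkOf₁, hrkOf₂]; exact hrk12
    exact_mod_cast h
  -- the key difference lemma for the glue map
  have hkey : ∀ ξ ∈ CharOf (1 : Matrix (Fin n) (Fin n) ℤ) S₁,
      ∀ ξ' ∈ CharOf (1 : Matrix (Fin n) (Fin n) ℤ) S₁, ∀ x : Fin n → ℚ,
      ξ' = ξ + (2 : ℚ) • x →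
      ∃ w ∈ intVecs (Fin n), g ξ' = g ξ + (2 : ℚ) • w ∧ π₁ w = x ∧
        Φ ξ' = Φ ξ + (2 : ℚ) • π₂ w := by
    intro ξ hξ ξ' hξ' x hx
    obtain ⟨w, hw, hww⟩ := char_intVecs_diff (hg ξ hξ).1 (hg ξ' hξ').1
    have h1 : ξ' = ξ + (2 : ℚ) • π₁ w := by
      rw [← (hg ξ hξ).2, ← (hg ξ' hξ').2, hww, hπ₁add, hπ₁smul]
    refine ⟨w, hw, hww, htwo _ _ (add_left_cancel (h1.symm.trans hx)), ?_⟩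
    show π₂ (g ξ') = π₂ (g ξ) + (2 : ℚ) • π₂ w
    rw [hww, hπ₂add, hπ₂smul]
  -- T1
  have hT1 : ∀ ξ ∈ CharOf (1 : Matrix (Fin n) (Fin n) ℤ) S₁,
      Φ ξ ∈ CharOf (1 : Matrix (Fin n) (Fin n) ℤ) S₂ :=
    fun ξ hξ => hcharπ₂ _ (hg ξ hξ).1
  -- T2
  have hT2 : ∀ ξ ∈ CharOf (1 : Matrix (Fin n) (Fin n) ℤ) S₁,
      ∀ ξ' ∈ CharOf (1 : Matrix (Fin n) (Fin n) ℤ) S₁,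
      (SameClass S₁ ξ ξ' ↔ SameClass S₂ (Φ ξ) (Φ ξ')) := by
    intro ξ hξ ξ' hξ'
    constructor
    · rintro ⟨y, hy, hyy⟩
      obtain ⟨w, hw, hgg, hπw, hΦΦ⟩ := hkey ξ hξ ξ' hξ' y hyy
      refine ⟨π₂ w, ?_, hΦΦ⟩
      have h1 : π₂ w = w - y := by show w - π₁ w = w - y; rw [hπw]
      rw [h1]
      refine hsat₂' _ (intVecs_sub hw (hsub₁ hy)) ?_
      rw [hπ₁sub, hπw, hπ₁left y (Submodule.subset_span hy), sub_self]
    · rintro ⟨y₂, hy₂, hyy⟩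
      obtain ⟨w, hw, hgg⟩ := char_intVecs_diff (hg ξ hξ).1 (hg ξ' hξ').1
      have hΦw : Φ ξ' = Φ ξ + (2 : ℚ) • π₂ w := by
        show π₂ (g ξ') = π₂ (g ξ) + (2 : ℚ) • π₂ w
        rw [hgg, hπ₂add, hπ₂smul]
      have hπ₂w : π₂ w = y₂ := htwo _ _ (add_left_cancel (hΦw.symm.trans hyy))
      have hwy : w - y₂ ∈ S₁ := by
        refine hsat₁' _ (intVecs_sub hw (hsub₂ hy₂)) ?_
        rw [hπ₂sub, hπ₂w, hπ₂right y₂ (Submodule.subset_span hy₂), sub_self]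
      refine ⟨w - y₂, hwy, ?_⟩
      have h1 : ξ' = ξ + (2 : ℚ) • π₁ w := by
        rw [← (hg ξ hξ).2, ← (hg ξ' hξ').2, hgg, hπ₁add, hπ₁smul]
      have h2 : π₁ w = w - y₂ := by
        have h3 := hπ₁₂ w
        rw [hπ₂w] at h3
        rw [eq_sub_iff_add_eq]
        exact h3.symm
      rw [h1, h2]
  -- T3
  have hT3 : ∀ μ ∈ CharOf (1 : Matrix (Fin n) (Fin n) ℤ) S₂,
      ∃ ξ ∈ CharOf (1 : Matrix (Fin n) (Fin n) ℤ) S₁, SameClass S₂ (Φ ξ) μ := by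
    intro μ hμ
    obtain ⟨χ, hχ, hπχ⟩ := hcharlift₂ μ hμ
    refine ⟨π₁ χ, hcharπ₁ χ hχ, ?_⟩
    obtain ⟨w, hw, hgg⟩ := char_intVecs_diff hχ (hg _ (hcharπ₁ χ hχ)).1
    have hπ₁w : π₁ w = 0 := by
      have h1 : π₁ (g (π₁ χ)) = π₁ χ := (hg _ (hcharπ₁ χ hχ)).2
      rw [hgg, hπ₁add, hπ₁smul] at h1
      have h2 : (2 : ℚ) • π₁ w = 0 := by
        have h3 := congrArg (fun t => t - π₁ χ) h1
        simpa using h3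
      exact htwo (π₁ w) 0 (by rw [h2, smul_zero])
    have hwS : w ∈ S₂ := hsat₂' w hw hπ₁w
    have hπ₂w : π₂ w = w := by show w - π₁ w = w; rw [hπ₁w, sub_zero]
    have hΦ : Φ (π₁ χ) = μ + (2 : ℚ) • w := by
      show π₂ (g (π₁ χ)) = μ + (2 : ℚ) • w
      rw [hgg, hπ₂add, hπ₂smul, hπχ, hπ₂w]
    refine ⟨-w, h₂.neg_mem' hwS, ?_⟩
    rw [hΦ]
    module
  -- T4
  have hT4 : ∀ ξ ∈ CharOf (1 : Matrix (Fin n) (Fin n) ℤ) S₁,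
      ∀ ξ' ∈ CharOf (1 : Matrix (Fin n) (Fin n) ℤ) S₁,
      ∀ (x : Fin n → ℚ) (y : Fin n → ℚ)
        (hx : x ∈ dualOf (1 : Matrix (Fin n) (Fin n) ℤ) S₁)
        (hy : y ∈ dualOf (1 : Matrix (Fin n) (Fin n) ℤ) S₂),
        ξ' = ξ + (2 : ℚ) • x → Φ ξ' = Φ ξ + (2 : ℚ) • y →
        ψ (dmk (1 : Matrix (Fin n) (Fin n) ℤ) S₁ hx)
          = dmk (1 : Matrix (Fin n) (Fin n) ℤ) S₂ hy := by
    intro ξ hξ ξ' hξ' x y hx hy hxe hye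
    obtain ⟨w, hw, hgg, hπw, hΦΦ⟩ := hkey ξ hξ ξ' hξ' x hxe
    have hyπ : y = π₂ w := htwo _ _ (add_left_cancel (hye.symm.trans hΦΦ))
    have h1 : ψ (dmk (1 : Matrix (Fin n) (Fin n) ℤ) S₁ hx)
        = QuotientAddGroup.mk ⟨π₂ (L₁ x), hF₁mem ⟨x, hx⟩⟩ := rfl
    have h2 : dmk (1 : Matrix (Fin n) (Fin n) ℤ) S₂ hy
        = QuotientAddGroup.mk (⟨y, hy⟩ : dualOf (1 : Matrix (Fin n) (Fin n) ℤ) S₂) := rfl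
    rw [h1, h2]
    apply hmkeq₂
    show y - π₂ (L₁ x) ∈ S₂
    have hd : π₂ w - π₂ (L₁ x) ∈ S₂ := by
      refine hdiff₂ w (L₁ x) hw (hL₁ x hx).1 ?_
      rw [hπw, (hL₁ x hx).2]
    rwa [← hyπ] at hd
  -- DCompat
  have hD : DCompat (1 : Matrix (Fin n) (Fin n) ℤ) S₁ (1 : Matrix (Fin n) (Fin n) ℤ) S₂
      (-1) Φ := by
    intro ξ hξ q hql
    obtain ⟨hmem, hlb⟩ := hql
    obtain ⟨ξm, hξm, hscm, hqe⟩ := hmem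
    obtain ⟨y, hy, hym⟩ := hscm
    have hshort : ξm ∈ ShortOf (1 : Matrix (Fin n) (Fin n) ℤ) S₁ := by
      refine ⟨hξm, fun χ'' hχ'' hsc' => ?_⟩
      have hsc'' : SameClass S₁ ξ χ'' := by
        obtain ⟨y', hy', hyy'⟩ := hsc'
        exact ⟨y + y', h₁.add_mem' hy hy', by rw [hyy', hym]; module⟩
      have hq2 : q ≤ (qform (1 : Matrix (Fin n) (Fin n) ℤ) χ'' χ'' - (rkOf S₁ : ℚ)) / 4 :=
        hlb ⟨χ'', hχ'', hsc'', rfl⟩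
      rw [hqe] at hq2
      linarith
    obtain ⟨χ₀, hχ₀short, hχ₀pair⟩ := hsurj ξm hshort
    have hχ₀char := hχ₀short.1
    have hπ₁χ₀ : π₁ χ₀ = ξm := by
      refine hext₁ _ (hπ₁mem χ₀) _ (hcharV₁ ξm hξm) fun u hu => ?_
      rw [hπ₁dot χ₀ u hu]
      have h := hχ₀pair u hu
      rwa [qform_one, qform_one] at h
    have hn₀ : χ₀ ⬝ᵥ χ₀ = n := by
      have h := short_intVecs_norm hχ₀short
      rwa [qform_one] at h
    have hsplit₀ : ξm ⬝ᵥ ξm + π₂ χ₀ ⬝ᵥ π₂ χ₀ = (n : ℚ) := by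
      have h := hsplit (π₁ χ₀) (hπ₁mem χ₀) (π₂ χ₀) (hπ₂mem χ₀)
      rw [← hπ₁₂ χ₀, hn₀, hπ₁χ₀] at h
      exact h.symm
    obtain ⟨w, hw, hgg⟩ := char_intVecs_diff (hg ξ hξ).1 hχ₀char
    have hπ₁w : π₁ w = y := by
      have h1 : ξm = ξ + (2 : ℚ) • π₁ w := by
        rw [← hπ₁χ₀, hgg, hπ₁add, hπ₁smul, (hg ξ hξ).2]
      exact htwo _ _ (add_left_cancel (h1.symm.trans hym))
    have hwy : w - y ∈ S₂ := by
      refine hsat₂' _ (intVecs_sub hw (hsub₁ hy)) ?_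
      rw [hπ₁sub, hπ₁w, hπ₁left y (Submodule.subset_span hy), sub_self]
    have hπ₂w : π₂ w = w - y := by show w - π₁ w = w - y; rw [hπ₁w]
    have hsc₀ : SameClass S₂ (Φ ξ) (π₂ χ₀) := by
      refine ⟨w - y, hwy, ?_⟩
      show π₂ χ₀ = π₂ (g ξ) + (2 : ℚ) • (w - y)
      rw [hgg, hπ₂add, hπ₂smul, hπ₂w]
    have hμ₀char : π₂ χ₀ ∈ CharOf (1 : Matrix (Fin n) (Fin n) ℤ) S₂ := hcharπ₂ χ₀ hχ₀char
    constructor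
    · refine ⟨π₂ χ₀, hμ₀char, hsc₀, ?_⟩
      rw [hqe, qform_one, qform_one]
      have h4 : ξm ⬝ᵥ ξm + π₂ χ₀ ⬝ᵥ π₂ χ₀ = (n : ℚ) := hsplit₀
      linarith
    · rintro t ⟨μ, hμ, ⟨y₂, hy₂, hμe⟩, ht⟩
      rw [ht, hqe, qform_one, qform_one]
      have hgdec : g ξ = ξ + π₂ (g ξ) := by
        have h := hπ₁₂ (g ξ)
        rw [(hg ξ hξ).2] at h
        exact h
      have he : ξm + μ = g ξ + (2 : ℚ) • (y + y₂) := by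
        rw [hym, hμe]
        show ξ + (2:ℚ) • y + (π₂ (g ξ) + (2:ℚ) • y₂) = g ξ + (2 : ℚ) • (y + y₂)
        calc ξ + (2:ℚ) • y + (π₂ (g ξ) + (2:ℚ) • y₂)
            = (ξ + π₂ (g ξ)) + (2:ℚ) • (y + y₂) := by module
          _ = g ξ + (2 : ℚ) • (y + y₂) := by rw [← hgdec]
      have hχ'char : ξm + μ ∈ CharOf (1 : Matrix (Fin n) (Fin n) ℤ) (intVecs (Fin n)) := by
        rw [he]
        exact char_intVecs_add_two_smul (hg ξ hξ).1 (intVecs_add (hsub₁ hy) (hsub₂ hy₂))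
      have hmin := char_intVecs_min hχ'char
      have hsplitμ : (ξm + μ) ⬝ᵥ (ξm + μ) = ξm ⬝ᵥ ξm + μ ⬝ᵥ μ :=
        hsplit _ (hcharV₁ ξm hξm) _ (hcharV₂ μ hμ)
      rw [hsplitμ] at hmin
      linarith
  -- condition (5)
  have hT5 : ∀ χ ∈ CharOf (1 : Matrix (Fin n) (Fin n) ℤ) (intVecs (Fin n)),
      ∀ ξ₁ ∈ CharOf (1 : Matrix (Fin n) (Fin n) ℤ) S₁,
      ∀ ξ₂ ∈ CharOf (1 : Matrix (Fin n) (Fin n) ℤ) S₂,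
      (∀ u ∈ S₁, qform (1 : Matrix (Fin n) (Fin n) ℤ) χ u
        = qform (1 : Matrix (Fin n) (Fin n) ℤ) ξ₁ u) →
      (∀ u ∈ S₂, qform (1 : Matrix (Fin n) (Fin n) ℤ) χ u
        = qform (1 : Matrix (Fin n) (Fin n) ℤ) ξ₂ u) →
      SameClass S₂ (Φ ξ₁) ξ₂ := by
    intro χ hχ ξ₁ hξ₁ ξ₂ hξ₂ hp₁ hp₂
    have hπ₁χ : π₁ χ = ξ₁ := by
      refine hext₁ _ (hπ₁mem χ) _ (hcharV₁ ξ₁ hξ₁) fun u hu => ?_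
      rw [hπ₁dot χ u hu]
      have h := hp₁ u hu
      rwa [qform_one, qform_one] at h
    have hπ₂χ : π₂ χ = ξ₂ := by
      refine hext₂ _ (hπ₂mem χ) _ (hcharV₂ ξ₂ hξ₂) fun u hu => ?_
      rw [hπ₂dot χ u hu]
      have h := hp₂ u hu
      rwa [qform_one, qform_one] at h
    obtain ⟨w, hw, hgg⟩ := char_intVecs_diff hχ (hg ξ₁ hξ₁).1
    have hπ₁w : π₁ w = 0 := by
      have h1 : π₁ (g ξ₁) = ξ₁ := (hg ξ₁ hξ₁).2
      rw [hgg, hπ₁add, hπ₁smul, hπ₁χ] at h1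
      have h2 : (2 : ℚ) • π₁ w = 0 := by
        have h3 := congrArg (fun t => t - ξ₁) h1
        simpa using h3
      exact htwo (π₁ w) 0 (by rw [h2, smul_zero])
    have hwS : w ∈ S₂ := hsat₂' w hw hπ₁w
    have hπ₂w : π₂ w = w := by show w - π₁ w = w; rw [hπ₁w, sub_zero]
    have hΦ : Φ ξ₁ = ξ₂ + (2 : ℚ) • w := by
      show π₂ (g ξ₁) = ξ₂ + (2 : ℚ) • w
      rw [hgg, hπ₂add, hπ₂smul, hπ₂χ, hπ₂w]
    refine ⟨-w, h₂.neg_mem' hwS, ?_⟩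
    rw [hΦ]
    module
  exact ⟨Φ, ψ, ⟨hT1, hT2, hT3, hT4⟩, hD, hT5⟩

end Greene
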